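/- arXiv:1809.02835 — 8 statements merged into one kernel-verified Lean document; each statement's English description precedes it below -/
import Mathlib

section
/- If H is a bipartite half-cover of K_n with no connected matching of size larger than f(n), then the 2-coloring of the edges of K_n obtained by coloring {i,j} (i<j) red if (u_i,v_j) ∈ E(H) and blue otherwise, has no monochromatic clique of size f(n)+2; i.e., any monochromatic clique of size r in this coloring yields a connected matching of size r−1 in H. -/
def BipMatching {A B : Type*} (E : A → B → Prop) (M : Finset (A × B)) : Prop :=
  (∀ e ∈ M, E e.1 e.2) ∧ ∀ e ∈ M, ∀ f ∈ M, e ≠ f → e.1 ≠ f.1 ∧ e.2 ≠ f.2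

/-- A connected matching: a matching in which every two distinct edges are
joined by an edge of the (bipartite) graph. -/
def BipConnMatching {A B : Type*} (E : A → B → Prop) (M : Finset (A × B)) : Prop :=
  BipMatching E M ∧ ∀ e ∈ M, ∀ f ∈ M, e ≠ f → (E e.1 f.2 ∨ E f.1 e.2)

lemma swap_connMatching {A : Type*} [DecidableEq A] (E : A → A → Prop)
    (M : Finset (A × A)) (h : BipConnMatching (fun a b => E b a) M) :
    BipConnMatching E (M.image Prod.swap) := by
  obtain ⟨⟨h1, h2⟩, h3⟩ := h
  refine ⟨⟨?_, ?_⟩, ?_⟩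
  · rintro e he
    obtain ⟨e', he', rfl⟩ := Finset.mem_image.mp he
    exact h1 e' he'
  · rintro e he f hf hef
    obtain ⟨e', he', rfl⟩ := Finset.mem_image.mp he
    obtain ⟨f', hf', rfl⟩ := Finset.mem_image.mp hf
    have : e' ≠ f' := fun h => hef (by rw [h])
    obtain ⟨ha, hb⟩ := h2 e' he' f' hf' this
    exact ⟨hb, ha⟩
  · rintro e he f hf hef
    obtain ⟨e', he', rfl⟩ := Finset.mem_image.mp he
    obtain ⟨f', hf', rfl⟩ := Finset.mem_image.mp hf
    have : e' ≠ f' := fun h => hef (by rw [h])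
    exact (h3 e' he' f' hf' this).symm

lemma chain_connMatching {n : ℕ} (E : Fin n → Fin n → Prop) (S : Finset (Fin n))
    (h : ∀ i ∈ S, ∀ j ∈ S, i < j → E i j) (hS : S.Nonempty) :
    ∃ M : Finset (Fin n × Fin n), BipConnMatching E M ∧ M.card + 1 = S.card := by
  set r := S.card with hr
  have hr1 : 1 ≤ r := Finset.card_pos.mpr hS
  let g : Fin r ≃o (S : Finset (Fin n)) := S.orderIsoOfFin rfl
  let gg : Fin r → Fin n := fun a => (g a : Fin n)
  have ggmono : StrictMono gg := fun a b hab =>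
    Subtype.coe_lt_coe.mpr (g.lt_iff_lt.mpr hab)
  have ggmem : ∀ a, gg a ∈ S := fun a => (g a).2
  let p : Fin (r - 1) → Fin n × Fin n := fun k =>
    (gg ⟨k, by omega⟩, gg ⟨k + 1, by have := k.isLt; omega⟩)
  have pinj : Function.Injective p := by
    intro k l hkl
    have h2 := ggmono.injective (congrArg Prod.fst hkl)
    simp only [Fin.mk.injEq] at h2
    exact Fin.ext h2
  refine ⟨Finset.image p Finset.univ, ⟨⟨?_, ?_⟩, ?_⟩, ?_⟩
  · rintro e he
    obtain ⟨k, _, rfl⟩ := Finset.mem_image.mp he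
    exact h _ (ggmem _) _ (ggmem _) (ggmono (by simp))
  · rintro e he fe hfe hne
    obtain ⟨k, _, rfl⟩ := Finset.mem_image.mp he
    obtain ⟨l, _, rfl⟩ := Finset.mem_image.mp hfe
    have hkl : k ≠ l := fun h => hne (by rw [h])
    have hkl' : (⟨k.val, by omega⟩ : Fin r) ≠ ⟨l.val, by omega⟩ := by
      intro h
      simp only [Fin.mk.injEq] at h
      exact hkl (Fin.ext h)
    have hkl'' : (⟨k.val + 1, by have := k.isLt; omega⟩ : Fin r) ≠
        ⟨l.val + 1, by have := l.isLt; omega⟩ := by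
      intro h
      simp only [Fin.mk.injEq] at h
      exact hkl (Fin.ext (by omega))
    exact ⟨ggmono.injective.ne hkl', ggmono.injective.ne hkl''⟩
  · rintro e he fe hfe hne
    obtain ⟨k, _, rfl⟩ := Finset.mem_image.mp he
    obtain ⟨l, _, rfl⟩ := Finset.mem_image.mp hfe
    have hkl : k ≠ l := fun h => hne (by rw [h])
    rcases lt_or_gt_of_ne (Fin.val_ne_of_ne hkl) with hlt | hlt
    · exact Or.inl (h _ (ggmem _) _ (ggmem _) (ggmono (by simp; omega)))
    · exact Or.inr (h _ (ggmem _) _ (ggmem _) (ggmono (by simp; omega)))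
  · rw [Finset.card_image_of_injective _ pinj, Finset.card_univ, Fintype.card_fin]
    omega

theorem stmt1 {n : ℕ} (f : ℕ) (E : Fin n → Fin n → Prop)
    (hcover : ∀ i j : Fin n, i ≠ j → E i j ∨ E j i)
    (hdiag : ∀ i : Fin n, ¬ E i i)
    (hsmall : ∀ M : Finset (Fin n × Fin n), BipConnMatching E M → M.card ≤ f) :
    ∀ S : Finset (Fin n),
      ((∀ i ∈ S, ∀ j ∈ S, i < j → E i j) ∨ (∀ i ∈ S, ∀ j ∈ S, i < j → ¬ E i j)) →
      (S.Nonempty → ∃ M : Finset (Fin n × Fin n), BipConnMatching E M ∧ M.card + 1 = S.card) ∧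
      S.card ≤ f + 1 := by
  intro S hcolor
  have key : S.Nonempty → ∃ M : Finset (Fin n × Fin n),
      BipConnMatching E M ∧ M.card + 1 = S.card := by
    intro hS
    rcases hcolor with hred | hblue
    · exact chain_connMatching E S hred hS
    · have h' : ∀ i ∈ S, ∀ j ∈ S, i < j → (fun a b => E b a) i j := by
        intro i hi j hj hij
        rcases hcover i j (ne_of_lt hij) with h | h
        · exact absurd h (hblue i hi j hj hij)
        · exact h
      obtain ⟨M', hM', hcard⟩ := chain_connMatching (fun a b => E b a) S h' hS
      refine ⟨M'.image Prod.swap, swap_connMatching E M' hM', ?_⟩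
      rw [Finset.card_image_of_injective _ Prod.swap_injective]
      exact hcard
  refine ⟨key, ?_⟩
  rcases S.eq_empty_or_nonempty with rfl | hS
  · simp
  · obtain ⟨M, hM, hcard⟩ := key hS
    have := hsmall M hM
    omega
end

section
/- Let G = ([n], E_G) be a graph and H = (A = {u_1,...,u_n}, B = {v_1,...,v_n}, E_H) a balanced bipartite graph. Define the bipartite graph G ⊟ H on vertex sets A, B with edges: (u_i,v_j) for i ≠ j whenever (u_i,v_j) ∈ E_H and {i,j} ∈ E_G, together with all edges (u_i,v_i) for i ∈ [n]. Then the maximum connected matching size satisfies ν_c(G ⊟ H) ≤ ω(G) + 3·ν_c(H), where ω(G) is the clique number of G. -/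
/-- The edge relation of `G ⊟ H`: all diagonal edges `(u_i, v_i)`, together with
`(u_i, v_j)` for `i ≠ j` whenever `(u_i,v_j) ∈ E_H` and `{i,j} ∈ E_G`. -/
def boxProd {n : ℕ} (G : SimpleGraph (Fin n)) (EH : Fin n → Fin n → Prop) :
    Fin n → Fin n → Prop :=
  fun i j => i = j ∨ (EH i j ∧ G.Adj i j)

lemma aux_indep {n : ℕ} : ∀ (k : ℕ) (O : Finset (Fin n × Fin n)), O.card ≤ k →
    (∀ e ∈ O, ∀ f ∈ O, e ≠ f → e.1 ≠ f.1 ∧ e.2 ≠ f.2) →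
    (∀ e ∈ O, e.1 ≠ e.2) →
    ∃ S ⊆ O, (∀ e ∈ S, ∀ f ∈ S, e ≠ f → e.1 ≠ f.2 ∧ f.1 ≠ e.2) ∧ O.card ≤ 3 * S.card := by
  intro k
  induction k with
  | zero =>
    intro O hc _ _
    exact ⟨∅, Finset.empty_subset _, by simp, by omega⟩
  | succ k ih =>
    intro O hc hm hd
    rcases O.eq_empty_or_nonempty with rfl | ⟨e, he⟩
    · exact ⟨∅, Finset.empty_subset _, by simp, by simp⟩
    · set R : Finset (Fin n × Fin n) := O.filter (fun f => f.2 = e.1 ∨ f.1 = e.2) with hR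
      have hRcard : R.card ≤ 2 := by
        have h1 : (O.filter (fun f => f.2 = e.1)).card ≤ 1 := by
          rw [Finset.card_le_one]
          intro a ha b hb
          simp only [Finset.mem_filter] at ha hb
          by_contra hne
          exact (hm a ha.1 b hb.1 hne).2 (ha.2.trans hb.2.symm)
        have h2 : (O.filter (fun f => f.1 = e.2)).card ≤ 1 := by
          rw [Finset.card_le_one]
          intro a ha b hb
          simp only [Finset.mem_filter] at ha hb
          by_contra hne
          exact (hm a ha.1 b hb.1 hne).1 (ha.2.trans hb.2.symm)
        calc R.card ≤ (O.filter (fun f => f.2 = e.1) ∪ O.filter (fun f => f.1 = e.2)).card := by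
              apply Finset.card_le_card
              intro a ha
              simp only [hR, Finset.mem_filter, Finset.mem_union] at ha ⊢
              tauto
          _ ≤ _ := (Finset.card_union_le _ _).trans (by omega)
      set O' : Finset (Fin n × Fin n) := O \ insert e R with hO'
      have heO' : e ∉ O' := by simp [hO']
      have hO'sub : O' ⊆ O := Finset.sdiff_subset
      have hcard' : O.card ≤ O'.card + 3 := by
        have : O ⊆ O' ∪ insert e R := by
          intro a ha
          simp only [hO', Finset.mem_union, Finset.mem_sdiff]
          tauto
        have h3 : (insert e R).card ≤ 3 := (Finset.card_insert_le _ _).trans (by omega)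
        have := (Finset.card_le_card this).trans (Finset.card_union_le _ _)
        omega
      have hO'lt : O'.card ≤ k := by
        have : O'.card < O.card := Finset.card_lt_card ⟨hO'sub, fun h => heO' (h he)⟩
        omega
      obtain ⟨S', hS'sub, hS'ind, hS'card⟩ := ih O' hO'lt
        (fun a ha b hb => hm a (hO'sub ha) b (hO'sub hb))
        (fun a ha => hd a (hO'sub ha))
      have heS' : e ∉ S' := fun h => heO' (hS'sub h)
      refine ⟨insert e S', ?_, ?_, ?_⟩
      · intro a ha
        rcases Finset.mem_insert.1 ha with rfl | h
        · exact he
        · exact hO'sub (hS'sub h)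
      · intro a ha b hb hne
        rcases Finset.mem_insert.1 ha with rfl | ha' <;> rcases Finset.mem_insert.1 hb with rfl | hb'
        · exact absurd rfl hne
        · have hbO' := hS'sub hb'
          have hbO : b ∈ O := hO'sub hbO'
          have hbni : b ∉ insert a R := by
            simp only [hO', Finset.mem_sdiff] at hbO'; exact hbO'.2
          have hbR : ¬(b.2 = a.1 ∨ b.1 = a.2) := fun h =>
            hbni (Finset.mem_insert_of_mem (Finset.mem_filter.2 ⟨hbO, h⟩))
          push_neg at hbR
          exact ⟨fun h => hbR.1 h.symm, hbR.2⟩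
        · have haO' := hS'sub ha'
          have haO : a ∈ O := hO'sub haO'
          have hani : a ∉ insert b R := by
            simp only [hO', Finset.mem_sdiff] at haO'; exact haO'.2
          have haR : ¬(a.2 = b.1 ∨ a.1 = b.2) := fun h =>
            hani (Finset.mem_insert_of_mem (Finset.mem_filter.2 ⟨haO, h⟩))
          push_neg at haR
          exact ⟨haR.2, fun h => haR.1 h.symm⟩
        · exact hS'ind a ha' b hb' hne
      · rw [Finset.card_insert_of_notMem heS']
        omega

/-- ν_c(G ⊟ H) ≤ ω(G) + 3 ν_c(H), phrased via upper bounds `K₁` on clique sizes of `G`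
and `K₂` on connected matching sizes of `H`. -/
theorem stmt2 {n : ℕ} (G : SimpleGraph (Fin n)) (EH : Fin n → Fin n → Prop)
    (K₁ K₂ : ℕ)
    (hω : ∀ C : Finset (Fin n), G.IsClique (C : Set (Fin n)) → C.card ≤ K₁)
    (hν : ∀ N : Finset (Fin n × Fin n), BipConnMatching EH N → N.card ≤ K₂) :
    ∀ M : Finset (Fin n × Fin n), BipConnMatching (boxProd G EH) M →
      M.card ≤ K₁ + 3 * K₂ := by
  intro M hM
  obtain ⟨⟨hMe, hMm⟩, hMc⟩ := hM
  set D : Finset (Fin n × Fin n) := M.filter (fun e => e.1 = e.2) with hD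
  set O : Finset (Fin n × Fin n) := M.filter (fun e => ¬ e.1 = e.2) with hO
  have hsplit : D.card + O.card = M.card := by
    rw [hD, hO]
    exact Finset.card_filter_add_card_filter_not (fun e : Fin n × Fin n => e.1 = e.2)
  -- diagonal part
  have hDcard : D.card ≤ K₁ := by
    set C : Finset (Fin n) := D.image Prod.fst with hC
    have hinj : Set.InjOn Prod.fst (D : Set (Fin n × Fin n)) := by
      intro a ha b hb hab
      simp only [hD, Finset.coe_filter, Set.mem_setOf_eq] at ha hb
      by_contra hne
      exact (hMm a ha.1 b hb.1 hne).1 hab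
    have hclique : G.IsClique (C : Set (Fin n)) := by
      intro i hi j hj hij
      simp only [hC, Finset.coe_image, Set.mem_image, Finset.mem_coe] at hi hj
      obtain ⟨a, ha, rfl⟩ := hi
      obtain ⟨b, hb, rfl⟩ := hj
      simp only [hD, Finset.mem_filter] at ha hb
      have hne : a ≠ b := fun h => hij (by rw [h])
      rcases hMc a ha.1 b hb.1 hne with h | h <;> rcases h with h | h
      · exact absurd (h.trans hb.2.symm) hij
      · exact (by rw [hb.2]; exact h.2 : G.Adj a.1 b.1)
      · exact absurd (h.trans ha.2.symm).symm hij
      · exact ((by rw [ha.2]; exact h.2 : G.Adj b.1 a.1)).symm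
    calc D.card = C.card := (Finset.card_image_of_injOn hinj).symm
      _ ≤ K₁ := hω C hclique
  -- off-diagonal part
  have hOm : ∀ e ∈ O, ∀ f ∈ O, e ≠ f → e.1 ≠ f.1 ∧ e.2 ≠ f.2 := by
    intro a ha b hb hne
    exact hMm a (Finset.mem_of_mem_filter a ha) b (Finset.mem_of_mem_filter b hb) hne
  have hOd : ∀ e ∈ O, e.1 ≠ e.2 := by
    intro a ha; exact (Finset.mem_filter.1 ha).2
  obtain ⟨S, hSsub, hSind, hScard⟩ := aux_indep O.card O le_rfl hOm hOd
  have hSM : ∀ e ∈ S, e ∈ M := fun e he => Finset.mem_of_mem_filter e (hSsub he)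
  have hSconn : BipConnMatching EH S := by
    refine ⟨⟨?_, ?_⟩, ?_⟩
    · intro a ha
      have haO := hSsub ha
      rcases hMe a (hSM a ha) with h | h
      · exact absurd h (hOd a haO)
      · exact h.1
    · intro a ha b hb hne
      exact hMm a (hSM a ha) b (hSM b hb) hne
    · intro a ha b hb hne
      have h12 := hSind a ha b hb hne
      rcases hMc a (hSM a ha) b (hSM b hb) hne with h | h
      · rcases h with h | h
        · exact absurd h h12.1
        · exact Or.inl h.1
      · rcases h with h | h
        · exact absurd h h12.2
        · exact Or.inr h.1
  have hOcard : O.card ≤ 3 * K₂ := by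
    have := hν S hSconn
    omega
  omega
end

section
/- Let G = ([n], E_G) be a graph and H a bipartite half-cover of K_n. Define G ⊟ H as the bipartite graph on A = {u_1,...,u_n}, B = {v_1,...,v_n} with edges (u_i,v_j) for i ≠ j whenever (u_i,v_j) ∈ E_H and {i,j} ∈ E_G, together with all diagonal edges (u_i,v_i). Then ν_c(G ⊟ H) ≥ ω(G). -/
/-- If `H` is a bipartite half-cover of `K_n`, then ν_c(G ⊟ H) ≥ ω(G): every clique of `G`
gives rise to a connected matching in `G ⊟ H` of at least the same size. -/
theorem stmt3 {n : ℕ} (G : SimpleGraph (Fin n)) (EH : Fin n → Fin n → Prop)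
    (hcover : ∀ i j : Fin n, i ≠ j → EH i j ∨ EH j i)
    (hdiag : ∀ i : Fin n, ¬ EH i i) :
    ∀ C : Finset (Fin n), G.IsClique (C : Set (Fin n)) →
      ∃ M : Finset (Fin n × Fin n), BipConnMatching (boxProd G EH) M ∧ C.card ≤ M.card := by
  intro C hC
  refine ⟨C.image (fun i => (i, i)), ⟨⟨?_, ?_⟩, ?_⟩, ?_⟩
  · intro e he
    simp only [Finset.mem_image] at he
    obtain ⟨i, _, rfl⟩ := he
    exact Or.inl rfl
  · intro e he f hf hne
    simp only [Finset.mem_image] at he hf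
    obtain ⟨i, _, rfl⟩ := he
    obtain ⟨j, _, rfl⟩ := hf
    constructor <;> simpa using fun h => hne (by simp [h])
  · intro e he f hf hne
    simp only [Finset.mem_image] at he hf
    obtain ⟨i, hi, rfl⟩ := he
    obtain ⟨j, hj, rfl⟩ := hf
    have hij : i ≠ j := fun h => hne (by simp [h])
    have hadj : G.Adj i j := hC hi hj hij
    rcases hcover i j hij with h | h
    · exact Or.inl (Or.inr ⟨h, hadj⟩)
    · exact Or.inr (Or.inr ⟨h, hadj.symm⟩)
  · rw [Finset.card_image_of_injective _ (fun a b h => (Prod.mk.injEq ..).mp h |>.1)]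
end

section
/- Let G = (A,B,E_G) be a bipartite graph with |A| = |B| = N and let k ≤ N. Construct H by adding disjoint sets A', B' of size N−k each, connecting every vertex of A' to every vertex of B ∪ B', and every vertex of B' to every vertex of A ∪ A'. Then G has a connected matching of size k if and only if H has a connected matching of size 2N−k (a perfect matching of H). -/
/-- The edge relation of `H`: the left side is `A ⊕ A'`, the right side is `B ⊕ B'`
(with `|A'| = |B'| = N - k`); `A`–`B` edges are those of `G`, every vertex of `A'` is
joined to all of `B ∪ B'`, and every vertex of `B'` is joined to all of `A ∪ A'`. -/
def extGraph (N k : ℕ) (EG : Fin N → Fin N → Prop) :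
    (Fin N ⊕ Fin (N - k)) → (Fin N ⊕ Fin (N - k)) → Prop
  | .inl a, .inl b => EG a b
  | _, _ => True

theorem stmt4 (N k : ℕ) (hk : k ≤ N) (EG : Fin N → Fin N → Prop) :
    (∃ M : Finset (Fin N × Fin N), BipConnMatching EG M ∧ M.card = k) ↔
    (∃ M' : Finset ((Fin N ⊕ Fin (N - k)) × (Fin N ⊕ Fin (N - k))),
      BipConnMatching (extGraph N k EG) M' ∧ M'.card = 2 * N - k) := by
  constructor
  · rintro ⟨M, ⟨⟨hE, hM⟩, hC⟩, hcard⟩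
    have hfst : Set.InjOn Prod.fst (M : Set (Fin N × Fin N)) := by
      intro e he f hf h
      by_contra hne
      exact (hM e he f hf hne).1 h
    have hsnd : Set.InjOn Prod.snd (M : Set (Fin N × Fin N)) := by
      intro e he f hf h
      by_contra hne
      exact (hM e he f hf hne).2 h
    have hcA : ((Finset.univ : Finset (Fin N)) \ M.image Prod.fst).card = N - k := by
      rw [Finset.card_sdiff_of_subset (Finset.subset_univ _),
        Finset.card_image_of_injOn hfst, hcard]
      simp
    have hcB : ((Finset.univ : Finset (Fin N)) \ M.image Prod.snd).card = N - k := by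
      rw [Finset.card_sdiff_of_subset (Finset.subset_univ _),
        Finset.card_image_of_injOn hsnd, hcard]
      simp
    set gA := ((Finset.univ : Finset (Fin N)) \ M.image Prod.fst).orderIsoOfFin hcA with hgA
    set gB := ((Finset.univ : Finset (Fin N)) \ M.image Prod.snd).orderIsoOfFin hcB with hgB
    have hgAmem : ∀ i, (gA i : Fin N) ∉ M.image Prod.fst := fun i =>
      (Finset.mem_sdiff.mp (gA i).2).2
    have hgBmem : ∀ i, (gB i : Fin N) ∉ M.image Prod.snd := fun i =>
      (Finset.mem_sdiff.mp (gB i).2).2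
    have hgAinj : Function.Injective (fun i => (gA i : Fin N)) := fun i j h =>
      gA.injective (Subtype.ext h)
    have hgBinj : Function.Injective (fun i => (gB i : Fin N)) := fun i j h =>
      gB.injective (Subtype.ext h)
    set p1 : Finset ((Fin N ⊕ Fin (N - k)) × (Fin N ⊕ Fin (N - k))) :=
      M.image (fun e => (Sum.inl e.1, Sum.inl e.2)) with hp1
    set p2 : Finset ((Fin N ⊕ Fin (N - k)) × (Fin N ⊕ Fin (N - k))) :=
      Finset.univ.image (fun i : Fin (N - k) => (Sum.inl (gA i : Fin N), Sum.inr i)) with hp2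
    set p3 : Finset ((Fin N ⊕ Fin (N - k)) × (Fin N ⊕ Fin (N - k))) :=
      Finset.univ.image (fun i : Fin (N - k) => (Sum.inr i, Sum.inl (gB i : Fin N))) with hp3
    have hmem : ∀ e ∈ p1 ∪ p2 ∪ p3,
        (∃ e0 ∈ M, e = (Sum.inl e0.1, Sum.inl e0.2)) ∨
        (∃ i, e = (Sum.inl (gA i : Fin N), Sum.inr i)) ∨
        (∃ i, e = (Sum.inr i, Sum.inl (gB i : Fin N))) := by
      intro e he
      simp only [hp1, hp2, hp3, Finset.mem_union, Finset.mem_image, Finset.mem_univ,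
        true_and] at he
      rcases he with (⟨e0, he0, h⟩ | ⟨i, h⟩) | ⟨i, h⟩
      · exact Or.inl ⟨e0, he0, h.symm⟩
      · exact Or.inr (Or.inl ⟨i, h.symm⟩)
      · exact Or.inr (Or.inr ⟨i, h.symm⟩)
    refine ⟨p1 ∪ p2 ∪ p3, ⟨⟨?_, ?_⟩, ?_⟩, ?_⟩
    · intro e he
      rcases hmem e he with ⟨e0, he0, rfl⟩ | ⟨i, rfl⟩ | ⟨i, rfl⟩
      · exact hE e0 he0
      · trivial
      · trivial
    · intro e he f hf hef
      rcases hmem e he with ⟨e0, he0, rfl⟩ | ⟨i, rfl⟩ | ⟨i, rfl⟩ <;>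
        rcases hmem f hf with ⟨f0, hf0, rfl⟩ | ⟨j, rfl⟩ | ⟨j, rfl⟩
      · have hne : e0 ≠ f0 := by rintro rfl; exact hef rfl
        have := hM e0 he0 f0 hf0 hne
        simp only [ne_eq, Sum.inl.injEq]
        exact this
      · constructor
        · simp only [ne_eq, Sum.inl.injEq]
          intro h
          exact hgAmem j (h ▸ Finset.mem_image_of_mem Prod.fst he0)
        · simp
      · constructor
        · simp
        · simp only [ne_eq, Sum.inl.injEq]
          intro h
          exact hgBmem j (h ▸ Finset.mem_image_of_mem Prod.snd he0)
      · constructor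
        · simp only [ne_eq, Sum.inl.injEq]
          intro h
          exact hgAmem i (h ▸ Finset.mem_image_of_mem Prod.fst hf0)
        · simp
      · have hij : i ≠ j := by rintro rfl; exact hef rfl
        constructor
        · simp only [ne_eq, Sum.inl.injEq]
          exact fun h => hij (hgAinj h)
        · simpa using hij
      · simp
      · constructor
        · simp
        · simp only [ne_eq, Sum.inl.injEq]
          intro h
          exact hgBmem i (h ▸ Finset.mem_image_of_mem Prod.snd hf0)
      · simp
      · have hij : i ≠ j := by rintro rfl; exact hef rfl
        constructor
        · simpa using hij
        · simp only [ne_eq, Sum.inl.injEq]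
          exact fun h => hij (hgBinj h)
    · intro e he f hf hef
      rcases hmem e he with ⟨e0, he0, rfl⟩ | ⟨i, rfl⟩ | ⟨i, rfl⟩ <;>
        rcases hmem f hf with ⟨f0, hf0, rfl⟩ | ⟨j, rfl⟩ | ⟨j, rfl⟩
      · have hne : e0 ≠ f0 := by rintro rfl; exact hef rfl
        exact hC e0 he0 f0 hf0 hne
      · exact Or.inl trivial
      · exact Or.inr trivial
      · exact Or.inr trivial
      · exact Or.inl trivial
      · exact Or.inr trivial
      · exact Or.inl trivial
      · exact Or.inl trivial
      · exact Or.inl trivial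
    · have hd12 : Disjoint p1 p2 := by
        rw [Finset.disjoint_left]
        intro a ha hb
        simp only [hp1, hp2, Finset.mem_image, Finset.mem_univ, true_and] at ha hb
        obtain ⟨e0, _, rfl⟩ := ha
        obtain ⟨i, h⟩ := hb
        simp at h
      have hd3 : Disjoint (p1 ∪ p2) p3 := by
        rw [Finset.disjoint_left]
        intro a ha hb
        simp only [hp1, hp2, hp3, Finset.mem_union, Finset.mem_image, Finset.mem_univ,
          true_and] at ha hb
        obtain ⟨i, rfl⟩ := hb
        rcases ha with ⟨e0, _, h⟩ | ⟨j, h⟩ <;> simp at h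
      rw [Finset.card_union_of_disjoint hd3, Finset.card_union_of_disjoint hd12]
      have h1 : p1.card = k := by
        rw [hp1, Finset.card_image_of_injective _ (by
          intro x y h
          simp only [Prod.mk.injEq, Sum.inl.injEq] at h
          exact Prod.ext h.1 h.2), hcard]
      have h2 : p2.card = N - k := by
        rw [hp2, Finset.card_image_of_injective _ (by
          intro x y h
          simp only [Prod.mk.injEq, Sum.inr.injEq] at h
          exact h.2)]
        simp
      have h3 : p3.card = N - k := by
        rw [hp3, Finset.card_image_of_injective _ (by
          intro x y h
          simp only [Prod.mk.injEq, Sum.inr.injEq] at h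
          exact h.1)]
        simp
      rw [h1, h2, h3]
      omega
  · rintro ⟨M', ⟨⟨hE, hM⟩, hC⟩, hcard⟩
    rcases Nat.eq_zero_or_pos N with rfl | hN
    · refine ⟨∅, ⟨⟨?_, ?_⟩, ?_⟩, ?_⟩ <;> simp <;> omega
    · set S := M'.filter (fun e => e.1.isLeft ∧ e.2.isLeft) with hS
      have hfst : Set.InjOn Prod.fst (M' : Set ((Fin N ⊕ Fin (N - k)) × (Fin N ⊕ Fin (N - k)))) := by
        intro e he f hf h
        by_contra hne
        exact (hM e he f hf hne).1 h
      have hsnd : Set.InjOn Prod.snd (M' : Set ((Fin N ⊕ Fin (N - k)) × (Fin N ⊕ Fin (N - k)))) := by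
        intro e he f hf h
        by_contra hne
        exact (hM e he f hf hne).2 h
      have hT1 : (M'.filter (fun e => e.1.isRight)).card ≤ N - k := by
        calc (M'.filter (fun e => e.1.isRight)).card
            = ((M'.filter (fun e => e.1.isRight)).image Prod.fst).card := by
              rw [Finset.card_image_of_injOn (hfst.mono (by
                intro e he; exact Finset.mem_of_mem_filter e he))]
          _ ≤ ((Finset.univ : Finset (Fin (N - k))).image Sum.inr).card := by
              apply Finset.card_le_card
              intro a ha
              simp only [Finset.mem_image, Finset.mem_filter] at ha ⊢
              obtain ⟨e, ⟨_, hr⟩, rfl⟩ := ha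
              obtain ⟨i, hi⟩ := Sum.isRight_iff.mp hr
              exact ⟨i, Finset.mem_univ i, hi.symm⟩
          _ ≤ N - k := by
              rw [Finset.card_image_of_injective _ Sum.inr_injective]
              simp
      have hT2 : (M'.filter (fun e => e.2.isRight)).card ≤ N - k := by
        calc (M'.filter (fun e => e.2.isRight)).card
            = ((M'.filter (fun e => e.2.isRight)).image Prod.snd).card := by
              rw [Finset.card_image_of_injOn (hsnd.mono (by
                intro e he; exact Finset.mem_of_mem_filter e he))]
          _ ≤ ((Finset.univ : Finset (Fin (N - k))).image Sum.inr).card := by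
              apply Finset.card_le_card
              intro a ha
              simp only [Finset.mem_image, Finset.mem_filter] at ha ⊢
              obtain ⟨e, ⟨_, hr⟩, rfl⟩ := ha
              obtain ⟨i, hi⟩ := Sum.isRight_iff.mp hr
              exact ⟨i, Finset.mem_univ i, hi.symm⟩
          _ ≤ N - k := by
              rw [Finset.card_image_of_injective _ Sum.inr_injective]
              simp
      have hsub : M' ⊆ S ∪ M'.filter (fun e => e.1.isRight) ∪ M'.filter (fun e => e.2.isRight) := by
        intro e he
        simp only [hS, Finset.mem_union, Finset.mem_filter]
        rcases h1 : e.1 with a | i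
        · rcases h2 : e.2 with b | j
          · exact Or.inl (Or.inl ⟨he, by simp [h1, h2]⟩)
          · exact Or.inr ⟨he, by simp [h2]⟩
        · exact Or.inl (Or.inr ⟨he, by simp [h1]⟩)
      have hScard : k ≤ S.card := by
        have := Finset.card_le_card hsub
        have h2 := Finset.card_union_le (S ∪ M'.filter (fun e => e.1.isRight))
          (M'.filter (fun e => e.2.isRight))
        have h3 := Finset.card_union_le S (M'.filter (fun e => e.1.isRight))
        omega
      obtain ⟨T, hTS, hTcard⟩ := Finset.exists_subset_card_eq hScard
      have hTmem : ∀ e ∈ T, ∃ a b, e = ((Sum.inl a : Fin N ⊕ Fin (N - k)), (Sum.inl b : Fin N ⊕ Fin (N - k))) ∧ e ∈ M' := by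
        intro e he
        have := hTS he
        simp only [hS, Finset.mem_filter] at this
        obtain ⟨hM', hl1, hl2⟩ := this
        obtain ⟨a, ha⟩ := Sum.isLeft_iff.mp hl1
        obtain ⟨b, hb⟩ := Sum.isLeft_iff.mp hl2
        exact ⟨a, b, by rw [← ha, ← hb], hM'⟩
      set ext : (Fin N ⊕ Fin (N - k)) → Fin N := Sum.elim id (fun _ => ⟨0, hN⟩) with hext
      refine ⟨T.image (fun e => (ext e.1, ext e.2)), ⟨⟨?_, ?_⟩, ?_⟩, ?_⟩
      · intro e he
        simp only [Finset.mem_image] at he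
        obtain ⟨e0, he0, rfl⟩ := he
        obtain ⟨a, b, rfl, hm'⟩ := hTmem e0 he0
        exact hE _ hm'
      · intro e he f hf hef
        simp only [Finset.mem_image] at he hf
        obtain ⟨e0, he0, rfl⟩ := he
        obtain ⟨f0, hf0, rfl⟩ := hf
        obtain ⟨a, b, rfl, hm'e⟩ := hTmem e0 he0
        obtain ⟨c, d, rfl, hm'f⟩ := hTmem f0 hf0
        have hne : ((Sum.inl a : Fin N ⊕ Fin (N - k)), (Sum.inl b : Fin N ⊕ Fin (N - k))) ≠ (Sum.inl c, Sum.inl d) := by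
          rintro h
          exact hef (by rw [h])
        have := hM _ hm'e _ hm'f hne
        simp only [ne_eq, Sum.inl.injEq] at this
        simpa [hext] using this
      · intro e he f hf hef
        simp only [Finset.mem_image] at he hf
        obtain ⟨e0, he0, rfl⟩ := he
        obtain ⟨f0, hf0, rfl⟩ := hf
        obtain ⟨a, b, rfl, hm'e⟩ := hTmem e0 he0
        obtain ⟨c, d, rfl, hm'f⟩ := hTmem f0 hf0
        have hne : ((Sum.inl a : Fin N ⊕ Fin (N - k)), (Sum.inl b : Fin N ⊕ Fin (N - k))) ≠ (Sum.inl c, Sum.inl d) := by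
          rintro h
          exact hef (by rw [h])
        have := hC _ hm'e _ hm'f hne
        simpa [hext, extGraph] using this
      · rw [Finset.card_image_of_injOn, hTcard]
        intro e he f hf h
        obtain ⟨a, b, rfl, _⟩ := hTmem e he
        obtain ⟨c, d, rfl, _⟩ := hTmem f hf
        simp only [hext, Sum.elim_inl, id_eq, Prod.mk.injEq] at h
        simp [Prod.ext_iff, h.1, h.2]
end

section
/- Let H = (U_H, E_H) be a graph on vertices u_1,...,u_n, and let G be the bipartite graph with parts {v_1,...,v_n} and {v'_1,...,v'_n}, edges (v_i,v'_i) for all i, and (v_i,v'_j) for all i < j with {u_i,u_j} ∈ E_H. Then the matching N = {(v_i,v'_i) : i ∈ [n]} is the unique perfect matching of G. -/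
/-- The bipartite graph `G` built from a graph `H` on `u_1, …, u_n`: edges `(v_i, v'_i)`
for all `i`, and `(v_i, v'_j)` for `i < j` with `{u_i, u_j} ∈ E_H`. -/
def bipOfGraph {n : ℕ} (H : SimpleGraph (Fin n)) : Fin n → Fin n → Prop :=
  fun i j => i = j ∨ (i < j ∧ H.Adj i j)

/-- The diagonal `N = {(v_i, v'_i) : i ∈ [n]}` is the unique perfect matching of `G`. -/
theorem stmt5 {n : ℕ} (H : SimpleGraph (Fin n)) :
    ∀ M : Finset (Fin n × Fin n), BipMatching (bipOfGraph H) M → M.card = n →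
      M = Finset.univ.image (fun i : Fin n => (i, i)) := by
  intro M ⟨hE, hM⟩ hcard
  -- injectivity of projections on M
  have hfst : Set.InjOn Prod.fst (M : Set (Fin n × Fin n)) := by
    intro e he f hf h
    by_contra hne
    exact (hM e he f hf hne).1 h
  have hsnd : Set.InjOn Prod.snd (M : Set (Fin n × Fin n)) := by
    intro e he f hf h
    by_contra hne
    exact (hM e he f hf hne).2 h
  have h1 : M.image Prod.fst = Finset.univ := by
    apply Finset.eq_univ_of_card
    rw [Finset.card_image_of_injOn hfst, hcard, Fintype.card_fin]
  have h2 : M.image Prod.snd = Finset.univ := by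
    apply Finset.eq_univ_of_card
    rw [Finset.card_image_of_injOn hsnd, hcard, Fintype.card_fin]
  -- sums of coordinates are equal
  have hsum : ∑ e ∈ M, (e.1 : ℕ) = ∑ e ∈ M, (e.2 : ℕ) := by
    have a1 : ∑ e ∈ M, (e.1 : ℕ) = ∑ i ∈ M.image Prod.fst, (i : ℕ) :=
      (Finset.sum_image (fun e he f hf h => hfst he hf h)).symm
    have a2 : ∑ e ∈ M, (e.2 : ℕ) = ∑ i ∈ M.image Prod.snd, (i : ℕ) :=
      (Finset.sum_image (fun e he f hf h => hsnd he hf h)).symm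
    rw [a1, a2, h1, h2]
  have hle : ∀ e ∈ M, (e.1 : ℕ) ≤ (e.2 : ℕ) := by
    intro e he
    rcases hE e he with h | ⟨h, _⟩
    · exact le_of_eq (congrArg Fin.val h)
    · exact le_of_lt h
  have hdiag : ∀ e ∈ M, e.1 = e.2 := by
    intro e he
    have := (Finset.sum_eq_sum_iff_of_le hle).mp hsum e he
    exact Fin.ext this
  -- conclude
  apply Finset.eq_of_subset_of_card_le
  · intro e he
    rw [Finset.mem_image]
    exact ⟨e.1, Finset.mem_univ _, by rw [hdiag e he]; exact Prod.ext (hdiag e he).symm rfl⟩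
  · rw [Finset.card_image_of_injective _ (fun a b h => (Prod.mk.injEq _ _ _ _ ▸ h).1),
      Finset.card_univ, Fintype.card_fin, hcard]
end

section
/- Let H be a graph on vertices u_1,...,u_n and let G be the bipartite graph with parts {v_1,...,v_n}, {v'_1,...,v'_n}, edges (v_i,v'_i) for all i, and edges (v_i,v'_j) for i < j whenever {u_i,u_j} ∈ E_H. Then for any subset I ⊆ [n], the set I is an independent set in H if and only if {(v_i,v'_i) : i ∈ I} is an induced matching in G. -/
/-- An induced matching: a matching no two of whose distinct edges are joined by an edge. -/
def BipInducedMatching {A B : Type*} (E : A → B → Prop) (M : Finset (A × B)) : Prop :=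
  BipMatching E M ∧ ∀ e ∈ M, ∀ f ∈ M, e ≠ f → ¬ (E e.1 f.2 ∨ E f.1 e.2)

theorem stmt6 {n : ℕ} (H : SimpleGraph (Fin n)) :
    ∀ I : Finset (Fin n),
      ((∀ i ∈ I, ∀ j ∈ I, ¬ H.Adj i j) ↔
        BipInducedMatching (bipOfGraph H) (I.image (fun i => (i, i)))) := by
  intro I
  constructor
  · intro hind
    refine ⟨⟨?_, ?_⟩, ?_⟩
    · rintro e he
      simp only [Finset.mem_image] at he
      obtain ⟨i, hi, rfl⟩ := he
      exact Or.inl rfl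
    · rintro e he f hf hef
      simp only [Finset.mem_image] at he hf
      obtain ⟨i, hi, rfl⟩ := he
      obtain ⟨j, hj, rfl⟩ := hf
      have : i ≠ j := fun h => hef (by rw [h])
      exact ⟨this, this⟩
    · rintro e he f hf hef hbad
      simp only [Finset.mem_image] at he hf
      obtain ⟨i, hi, rfl⟩ := he
      obtain ⟨j, hj, rfl⟩ := hf
      have hij : i ≠ j := fun h => hef (by rw [h])
      rcases hbad with h | h <;> rcases h with h | ⟨_, hadj⟩
      · exact hij h
      · exact hind i hi j hj hadj
      · exact hij h.symm
      · exact hind j hj i hi hadj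
  · rintro ⟨_, hind⟩ i hi j hj hadj
    have hij : i ≠ j := fun h => H.loopless.irrefl i (h ▸ hadj)
    have hi' : (i, i) ∈ I.image (fun i => (i, i)) := Finset.mem_image_of_mem _ hi
    have hj' : (j, j) ∈ I.image (fun i => (i, i)) := Finset.mem_image_of_mem _ hj
    have hne : ((i,i) : Fin n × Fin n) ≠ (j,j) := fun h => hij (congrArg Prod.fst h)
    have := hind _ hi' _ hj' hne
    rcases lt_or_gt_of_ne hij with hlt | hgt
    · exact this (Or.inl (Or.inr ⟨hlt, hadj⟩))
    · exact this (Or.inr (Or.inr ⟨hgt, hadj.symm⟩))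
end

section
/- Let G = (A,B,E) be a balanced bipartite graph with girth g, and suppose there are t ∈ ℕ and β > 0 such that every vertex subset T with |T ∩ A| = |T ∩ B| ≤ s ≤ t spans at most (2 + β/g)s edges. Then α_{≤t}(G) ≥ 1/2 − (1+β)/g, i.e., every matching of size at most t in G contains an induced matching of at least a (1/2 − (1+β)/g) fraction of its edges. -/
/-- A matching in a graph `G`, given as a finite set of ordered pairs of adjacent
vertices, pairwise vertex-disjoint. -/
def GMatching {V : Type*} (G : SimpleGraph V) (M : Finset (V × V)) : Prop :=
  (∀ e ∈ M, G.Adj e.1 e.2) ∧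
  ∀ e ∈ M, ∀ f ∈ M, e ≠ f →
    e.1 ≠ f.1 ∧ e.1 ≠ f.2 ∧ e.2 ≠ f.1 ∧ e.2 ≠ f.2

/-- Two (disjoint) edges are joined by an edge of `G`. -/
def EdgeJoined {V : Type*} (G : SimpleGraph V) (e f : V × V) : Prop :=
  G.Adj e.1 f.1 ∨ G.Adj e.1 f.2 ∨ G.Adj e.2 f.1 ∨ G.Adj e.2 f.2

/-- A connected matching: every two distinct edges are joined by an edge of `G`. -/
def GConnMatching {V : Type*} (G : SimpleGraph V) (M : Finset (V × V)) : Prop :=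
  GMatching G M ∧ ∀ e ∈ M, ∀ f ∈ M, e ≠ f → EdgeJoined G e f

/-- An induced matching: no two distinct edges are joined by an edge of `G`. -/
def GInducedMatching {V : Type*} (G : SimpleGraph V) (M : Finset (V × V)) : Prop :=
  GMatching G M ∧ ∀ e ∈ M, ∀ f ∈ M, e ≠ f → ¬ EdgeJoined G e f

set_option linter.unusedSectionVars false
set_option maxHeartbeats 1000000

namespace AIM
variable {V : Type*} [DecidableEq V] (G : SimpleGraph V) [DecidableRel G.Adj]

/-- conflict relation -/
def Conf (e f : V × V) : Prop := e ≠ f ∧ EdgeJoined G e f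

instance (e f : V × V) : Decidable (Conf G e f) := by
  unfold Conf EdgeJoined; infer_instance

/-- vertex membership in an ordered pair -/
def Vm (e : V × V) (v : V) : Prop := v = e.1 ∨ v = e.2

variable {G}

lemma EdgeJoined.symm {e f : V × V} (h : EdgeJoined G e f) : EdgeJoined G f e := by
  unfold EdgeJoined at *
  rcases h with h | h | h | h
  · exact Or.inl h.symm
  · exact Or.inr (Or.inr (Or.inl h.symm))
  · exact Or.inr (Or.inl h.symm)
  · exact Or.inr (Or.inr (Or.inr h.symm))

lemma Conf.symm {e f : V × V} (h : Conf G e f) : Conf G f e :=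
  ⟨h.1.symm, EdgeJoined.symm h.2⟩

lemma Conf.ne {e f : V × V} (h : Conf G e f) : e ≠ f := h.1

lemma matching_subset {M M' : Finset (V × V)} (h : GMatching G M) (hs : M' ⊆ M) :
    GMatching G M' :=
  ⟨fun e he => h.1 e (hs he), fun e he f hf hef => h.2 e (hs he) f (hs hf) hef⟩

/-- distinct matching edges are vertex disjoint -/
lemma vdisj {M : Finset (V × V)} (h : GMatching G M) {e f : V × V}
    (he : e ∈ M) (hf : f ∈ M) {v : V} (hv : Vm e v) (hw : Vm f v) : e = f := by
  by_contra hne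
  obtain ⟨h1, h2, h3, h4⟩ := h.2 e he f hf hne
  rcases hv with rfl | rfl <;> rcases hw with h | h <;> simp_all

variable (G) in
/-- a walk inside a single matching edge -/
lemma walk_in_edge {e : V × V} (h : G.Adj e.1 e.2) {y z : V} (hy : Vm e y) (hz : Vm e z) :
    ∃ w : G.Walk y z, w.length ≤ 1 ∧ ∀ s ∈ w.edges, ∀ v ∈ s, Vm e v := by
  by_cases hyz : y = z
  · subst hyz; exact ⟨SimpleGraph.Walk.nil, by simp, by simp⟩
  · have hadj : G.Adj y z := by
      rcases hy with rfl | rfl <;> rcases hz with rfl | rfl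
      · exact absurd rfl hyz
      · exact h
      · exact h.symm
      · exact absurd rfl hyz
    refine ⟨hadj.toWalk, by simp, ?_⟩
    intro s hs v hv
    simp [SimpleGraph.Walk.edges] at hs
    subst hs
    rcases Sym2.mem_iff.mp hv with rfl | rfl
    · exact hy
    · exact hz

/-- pick a concrete joining G-edge out of a conflict -/
lemma Conf.pick {e f : V × V} (h : EdgeJoined G e f) :
    ∃ u v, G.Adj u v ∧ Vm e u ∧ Vm f v := by
  rcases h with h | h | h | h
  · exact ⟨e.1, f.1, h, Or.inl rfl, Or.inl rfl⟩
  · exact ⟨e.1, f.2, h, Or.inl rfl, Or.inr rfl⟩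
  · exact ⟨e.2, f.1, h, Or.inr rfl, Or.inl rfl⟩
  · exact ⟨e.2, f.2, h, Or.inr rfl, Or.inr rfl⟩

/-- walk through a chain of conflicting matching edges -/
lemma walk_through : ∀ (L : List (V × V)) (hne : L ≠ [])
    (_ : ∀ f ∈ L, G.Adj f.1 f.2) (_ : List.Chain' (Conf G) L)
    {y z : V} (_ : Vm (L.head hne) y) (_ : Vm (L.getLast hne) z),
    ∃ w : G.Walk y z, w.length ≤ 2 * L.length - 1 ∧
      ∀ s ∈ w.edges, ∀ v ∈ s, ∃ f ∈ L, Vm f v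
  | [], hne => absurd rfl hne
  | [e], _ => by
    intro hadj _ y z hy hz
    simp at hy hz
    obtain ⟨w, hw1, hw2⟩ := walk_in_edge G (hadj e (by simp)) hy hz
    exact ⟨w, by simpa using hw1, fun s hs v hv => ⟨e, by simp, hw2 s hs v hv⟩⟩
  | e :: e' :: L, _ => by
    intro hadj hch y z hy hz
    have hch' : List.Chain' (Conf G) (e' :: L) := hch.tail
    have hconf : Conf G e e' := (List.isChain_cons_cons.mp hch).1
    obtain ⟨u, v, huv, hu, hv⟩ := Conf.pick hconf.2
    obtain ⟨w1, hw11, hw12⟩ := walk_in_edge G (hadj e (by simp)) hy hu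
    have hne' : e' :: L ≠ [] := by simp
    obtain ⟨w2, hw21, hw22⟩ := walk_through (e' :: L) hne'
      (fun f hf => hadj f (by simp [hf])) hch' hv (by simpa using hz)
    refine ⟨w1.append (SimpleGraph.Walk.cons huv w2), ?_, ?_⟩
    · rw [SimpleGraph.Walk.length_append, SimpleGraph.Walk.length_cons]
      simp only [List.length_cons] at hw21 ⊢
      omega
    · intro s hs x hx
      rw [SimpleGraph.Walk.edges_append, List.mem_append] at hs
      rcases hs with hs | hs
      · exact ⟨e, by simp, hw12 s hs x hx⟩
      · rw [SimpleGraph.Walk.edges_cons, List.mem_cons] at hs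
        rcases hs with rfl | hs
        · rcases Sym2.mem_iff.mp hx with rfl | rfl
          · exact ⟨e, by simp, hu⟩
          · exact ⟨e', by simp, hv⟩
        · obtain ⟨f, hf, hfv⟩ := hw22 s hs x hx
          exact ⟨f, by simp [hf], hfv⟩



lemma egirth_le_of_cycle {a : V} {w : G.Walk a a} (h : w.IsCycle) :
    G.egirth ≤ w.length := by
  rw [SimpleGraph.egirth]
  exact (iInf_le _ a).trans ((iInf_le _ w).trans (iInf_le _ h))

/-- a conflict cycle among matching edges forces a short cycle in G -/
lemma girth_transfer {M : Finset (V × V)} (hM : GMatching G M) :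
    ∀ (c : List (V × V)) (_ : c.Nodup) (_ : 3 ≤ c.length)
    (_ : List.Chain' (Conf G) c) (_ : ∀ f ∈ c, f ∈ M)
    (hne : c ≠ []) (_ : Conf G (c.getLast hne) (c.head hne)),
    G.egirth ≤ (2 * c.length : ℕ)
  | [], _, h3 => by simp at h3
  | [_], _, h3 => by simp at h3
  | [_, _], _, h3 => by simp at h3
  | f₀ :: f₁ :: rest, hnd, h3 => by
    intro hch hmem hne hwrap
    have hrne : f₁ :: rest ≠ [] := by simp
    have hrestne : rest ≠ [] := by
      intro h; subst h; simp at h3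
    -- the joining edge between f₀ and f₁
    have hconf01 : Conf G f₀ f₁ := (List.isChain_cons_cons.mp hch).1
    obtain ⟨a, b, hab, ha, hb⟩ := Conf.pick hconf01.2
    -- the joining edge between the last edge and f₀
    have hlastmem : (f₁ :: rest).getLast hrne ∈ f₁ :: rest := List.getLast_mem _
    have hwrap' : Conf G ((f₁ :: rest).getLast hrne) f₀ := by
      have : (f₀ :: f₁ :: rest).getLast hne = (f₁ :: rest).getLast hrne := by
        simp [List.getLast_cons hrne]
      rw [this] at hwrap
      simpa using hwrap
    obtain ⟨x, a', hxa', hx, ha'⟩ := Conf.pick hwrap'.2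
    -- membership and distinctness facts
    have hf0M : f₀ ∈ M := hmem _ (by simp)
    have hf1M : f₁ ∈ M := hmem _ (by simp)
    have hlastM : (f₁ :: rest).getLast hrne ∈ M := hmem _ (by simpa using Or.inr hlastmem)
    have hf0nt : f₀ ∉ f₁ :: rest := (List.nodup_cons.mp hnd).1
    have hf01 : f₀ ≠ f₁ := by intro h; exact hf0nt (h ▸ by simp)
    have hlast1 : (f₁ :: rest).getLast hrne ≠ f₁ := by
      have hnd' : (f₁ :: rest).Nodup := (List.nodup_cons.mp hnd).2
      rw [List.getLast_cons hrestne]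
      intro h
      exact (List.nodup_cons.mp hnd').1 (h ▸ List.getLast_mem hrestne)
    -- build the walk from b to a
    obtain ⟨w2, hw21, hw22⟩ := walk_through (f₁ :: rest) hrne
      (fun f hf => hM.1 f (hmem f (by simp [hf]))) (List.isChain_cons_cons.mp hch).2
      (by simpa using hb) hx
    obtain ⟨w3, hw31, hw32⟩ := walk_in_edge G (hM.1 f₀ hf0M) ha' ha
    set W : G.Walk b a := w2.append (SimpleGraph.Walk.cons hxa' w3) with hW
    have hWlen : W.length ≤ 2 * (f₀ :: f₁ :: rest).length - 1 := by
      rw [hW, SimpleGraph.Walk.length_append, SimpleGraph.Walk.length_cons]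
      simp only [List.length_cons] at hw21 ⊢
      omega
    -- the closing edge is not on the walk
    have hnotW : s(a, b) ∉ W.edges := by
      rw [hW, SimpleGraph.Walk.edges_append, SimpleGraph.Walk.edges_cons]
      intro hmem'
      rcases List.mem_append.mp hmem' with hs | hs
      · obtain ⟨f, hf, hfa⟩ := hw22 _ hs a (by simp)
        exact hf0nt ((vdisj hM hf0M (hmem f (by simp [hf])) ha hfa) ▸ hf)
      · rcases List.mem_cons.mp hs with hs | hs
        · rcases Sym2.eq_iff.mp hs.symm with ⟨h1, h2⟩ | ⟨h1, h2⟩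
          · -- x = a, a' = b
            exact hf01 (vdisj hM hf0M hf1M (h2 ▸ ha') hb)
          · -- x = b, a' = a
            exact hlast1 (vdisj hM hlastM hf1M (h1 ▸ hx) hb)
        · have := hw32 _ hs b (by simp)
          exact hf01 (vdisj hM hf0M hf1M this hb)
    -- make it a path and close the cycle
    have hnotp : s(a, b) ∉ W.bypass.edges := fun h => hnotW (W.edges_bypass_subset h)
    set p : G.Path b a := W.toPath with hp
    have hcyc : (SimpleGraph.Walk.cons hab (p : G.Walk b a)).IsCycle := by
      apply SimpleGraph.Path.cons_isCycle
      exact hnotp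
    have hplen : (p : G.Walk b a).length ≤ W.length :=
      SimpleGraph.Walk.length_bypass_le _
    have hlen2 : (SimpleGraph.Walk.cons hab (p : G.Walk b a)).length ≤
        2 * (f₀ :: f₁ :: rest).length := by
      rw [SimpleGraph.Walk.length_cons]
      simp only [List.length_cons] at hWlen ⊢
      omega
    calc G.egirth ≤ ((SimpleGraph.Walk.cons hab (p : G.Walk b a)).length : ℕ∞) :=
          egirth_le_of_cycle hcyc
      _ ≤ ((2 * (f₀ :: f₁ :: rest).length : ℕ) : ℕ∞) := by exact_mod_cast Nat.cast_le.mpr hlen2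



variable (G) in
/-- conflict degree within M -/
def degC (M : Finset (V × V)) (e : V × V) : ℕ := (M.filter (fun f => Conf G e f)).card

lemma degC_mono {M M' : Finset (V × V)} (h : M' ⊆ M) (e : V × V) :
    degC G M' e ≤ degC G M e :=
  Finset.card_le_card (Finset.filter_subset_filter _ h)

/-- extract a conflict cycle when all conflict degrees are ≥ 2 -/
lemma exists_conf_cycle {M : Finset (V × V)} (hMne : M.Nonempty)
    (hdeg : ∀ e ∈ M, 2 ≤ degC G M e) :
    ∃ (c : List (V × V)) (hne : c ≠ []), c.Nodup ∧ 3 ≤ c.length ∧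
      List.Chain' (Conf G) c ∧ (∀ f ∈ c, f ∈ M) ∧
      Conf G (c.getLast hne) (c.head hne) := by
  have key : ∀ j : ℕ,
      (∃ (c : List (V × V)) (hne : c ≠ []), c.Nodup ∧ 3 ≤ c.length ∧
        List.Chain' (Conf G) c ∧ (∀ f ∈ c, f ∈ M) ∧
        Conf G (c.getLast hne) (c.head hne)) ∨
      (∃ l : List (V × V), l.Nodup ∧ List.Chain' (Conf G) l ∧
        (∀ f ∈ l, f ∈ M) ∧ l ≠ [] ∧ j ≤ l.length) := by
    intro j
    induction j with
    | zero =>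
      obtain ⟨e, he⟩ := hMne
      exact Or.inr ⟨[e], by simp, List.isChain_singleton _, by simpa using he, by simp, by simp⟩
    | succ j ih =>
      rcases ih with h | ⟨l, hnd, hch, hmem, hlne, hlen⟩
      · exact Or.inl h
      obtain ⟨x, rest, rfl⟩ := List.exists_cons_of_ne_nil hlne
      have hcard : 2 ≤ (M.filter (fun f => Conf G x f)).card := hdeg x (hmem x (by simp))
      have h2 : ∃ y ∈ M.filter (fun f => Conf G x f), y ≠ rest.headD x := by
        obtain ⟨y₁, hy₁, y₂, hy₂, hne12⟩ := Finset.one_lt_card.mp (show 1 < (M.filter (fun f => Conf G x f)).card by omega)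
        by_cases h : y₁ = rest.headD x
        · exact ⟨y₂, hy₂, by rw [← h]; exact hne12.symm⟩
        · exact ⟨y₁, hy₁, h⟩
      obtain ⟨y, hyM, hyhd⟩ := h2
      rw [Finset.mem_filter] at hyM
      have hconf : Conf G x y := hyM.2
      by_cases hyl : y ∈ x :: rest
      · -- found a cycle: take the initial segment up to y
        left
        obtain ⟨i, hi, hget⟩ := List.getElem_of_mem hyl
        have hi0 : i ≠ 0 := by
          intro h; subst h
          exact hconf.ne (by simpa using hget)
        have hi1 : i ≠ 1 := by
          intro h; subst h
          apply hyhd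
          rw [← hget]
          simp only [List.length_cons] at hi
          obtain ⟨r, rs, rfl⟩ := List.exists_cons_of_ne_nil
            (show rest ≠ [] by intro h; subst h; simp at hi)
          simp
        -- so i = k + 1 with k ≥ 1
        obtain ⟨k, rfl⟩ : ∃ k, i = k + 1 := ⟨i - 1, by omega⟩
        have hk1 : 1 ≤ k := by omega
        simp only [List.length_cons] at hi
        have hkr : k < rest.length := by omega
        have hgr : rest[k] = y := by rw [← hget]; simp
        have htne : rest.take (k+1) ≠ [] := by
          intro h
          have := congrArg List.length h
          simp only [List.length_take, List.length_nil] at this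
          omega
        have hpre : x :: rest.take (k+1) <+: x :: rest := by
          obtain ⟨t, ht⟩ := List.take_prefix (k+1) rest
          exact ⟨t, by rw [List.cons_append, ht]⟩
        have hclen : (x :: rest.take (k+1)).length = k + 2 := by
          simp only [List.length_cons, List.length_take]
          omega
        have hcne : x :: rest.take (k+1) ≠ [] := by simp
        refine ⟨x :: rest.take (k+1), hcne, hnd.sublist hpre.sublist, by omega,
          hch.prefix hpre, fun f hf => hmem f (hpre.sublist.mem hf), ?_⟩
        rw [List.head_cons, List.getLast_cons htne, List.getLast_eq_getElem]
        have hlen' : (rest.take (k+1)).length - 1 = k := by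
          simp only [List.length_take]; omega
        have hgoal : (rest.take (k+1))[(rest.take (k+1)).length - 1]'(by
            rw [hlen']; simp only [List.length_take]; omega) = y := by
          have h2 := List.getElem_take (xs := rest) (j := k+1)
            (i := (rest.take (k+1)).length - 1)
            (h := by rw [hlen']; simp only [List.length_take]; omega)
          rw [h2]
          simp only [hlen']
          exact hgr
        rw [hgoal]
        exact hconf.symm
      · -- extend the chain
        right
        refine ⟨y :: x :: rest, List.nodup_cons.mpr ⟨hyl, hnd⟩,
          List.isChain_cons_cons.mpr ⟨hconf.symm, hch⟩, ?_, by simp, ?_⟩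
        · intro f hf
          rcases List.mem_cons.mp hf with rfl | hf
          · exact hyM.1
          · exact hmem f hf
        · simp only [List.length_cons]
          simp only [List.length_cons] at hlen
          omega
  rcases key (M.card + 1) with h | ⟨l, hnd, _, hmem, _, hlen⟩
  · exact h
  · exfalso
    have : l.length ≤ M.card := by
      have h1 : l.toFinset ⊆ M := fun v hv => hmem v (List.mem_toFinset.mp hv)
      have h2 := Finset.card_le_card h1
      rwa [List.toFinset_card_of_nodup hnd] at h2
    omega



/-- take every other element of a list -/
def everyOther {α : Type*} : List α → List α
  | [] => []
  | [a] => [a]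
  | a :: _ :: rest => a :: everyOther rest

lemma eo_len {α : Type*} : ∀ l : List α, l.length ≤ 2 * (everyOther l).length
  | [] => by simp [everyOther]
  | [a] => by simp [everyOther]
  | a :: b :: rest => by
    simp only [everyOther, List.length_cons]
    have := eo_len rest
    omega

lemma eo_sublist {α : Type*} : ∀ l : List α, (everyOther l).Sublist l
  | [] => by simp [everyOther]
  | [a] => by simp [everyOther]
  | a :: b :: rest => by
    simp only [everyOther]
    exact (((eo_sublist rest).cons b).cons₂ a)

lemma eo_idx {α : Type*} : ∀ (l : List α) (x : α), x ∈ everyOther l →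
    ∃ i, ∃ h : i < l.length, i % 2 = 0 ∧ l[i] = x
  | [], x => by simp [everyOther]
  | [a], x => by
    simp [everyOther]
    rintro rfl
    rfl
  | a :: b :: rest, x => by
    simp only [everyOther, List.mem_cons]
    rintro (rfl | hx)
    · exact ⟨0, by simp, by simp, rfl⟩
    · obtain ⟨i, h, hpar, hget⟩ := eo_idx rest x hx
      exact ⟨i + 2, by simp; omega, by omega, by simpa using hget⟩

/-- on a conflict cycle with all conflict degrees ≤ 2, every conflict neighbour of a
cycle element is one of its two cyclic neighbours -/
lemma cyc_classify {M : Finset (V × V)} {cl : List (V × V)}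
    (hnd : cl.Nodup) (h3 : 3 ≤ cl.length) (hch : List.Chain' (Conf G) cl)
    (hmem : ∀ f ∈ cl, f ∈ M) (hne : cl ≠ [])
    (hwrap : Conf G (cl.getLast hne) (cl.head hne))
    (hdeg : ∀ e ∈ M, degC G M e ≤ 2) :
    ∀ (i : ℕ) (hi : i < cl.length), ∀ x ∈ M, Conf G (cl[i]) x →
      ∃ (j : ℕ) (hj : j < cl.length), x = cl[j] ∧
        (j = i + 1 ∨ i = j + 1 ∨ (i = 0 ∧ j = cl.length - 1) ∨
          (j = 0 ∧ i = cl.length - 1)) := by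
  have hwrap' : Conf G (cl[cl.length - 1]) (cl[0]) := by
    have h1 : cl.getLast hne = cl[cl.length - 1] := List.getLast_eq_getElem hne
    have h2 : cl.head hne = cl[0] := List.head_eq_getElem hne
    rw [← h1, ← h2]; exact hwrap
  have hchain : ∀ (i : ℕ) (h : i + 1 < cl.length),
      Conf G (cl[i]) (cl[i+1]) := by
    intro i h
    have := List.isChain_iff_getElem.mp hch i (by omega)
    simpa using this
  intro i hi x hxM hconf
  obtain ⟨nx, hnxlt, hnxspec, hconfnx⟩ :
      ∃ nx, ∃ h : nx < cl.length, (nx = i + 1 ∨ (i = cl.length - 1 ∧ nx = 0)) ∧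
        Conf G (cl[i]) (cl[nx]) := by
    by_cases h : i = cl.length - 1
    · subst h
      exact ⟨0, by omega, Or.inr ⟨rfl, rfl⟩, hwrap'⟩
    · exact ⟨i + 1, by omega, Or.inl rfl, hchain i (by omega)⟩
  obtain ⟨pv, hpvlt, hpvspec, hconfpv⟩ :
      ∃ pv, ∃ h : pv < cl.length, (i = pv + 1 ∨ (pv = cl.length - 1 ∧ i = 0)) ∧
        Conf G (cl[i]) (cl[pv]) := by
    by_cases h : i = 0
    · subst h
      exact ⟨cl.length - 1, by omega, Or.inr ⟨rfl, rfl⟩, hwrap'.symm⟩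
    · refine ⟨i - 1, by omega, Or.inl (by omega), ?_⟩
      have h2 : i - 1 + 1 = i := by omega
      have := hchain (i - 1) (by omega)
      have h3' : cl[i - 1 + 1] = cl[i] := by
        congr 1
      rw [h3'] at this
      exact this.symm
  have hne' : pv ≠ nx := by omega
  have hnodup_ne : (cl[pv]) ≠ (cl[nx]) := fun h =>
    hne' (hnd.getElem_inj_iff.mp h)
  have hsub : ({cl[pv], cl[nx]} : Finset (V × V)) ⊆
      M.filter (fun f => Conf G (cl[i]) f) := by
    intro z hz
    rcases Finset.mem_insert.mp hz with rfl | hz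
    · exact Finset.mem_filter.mpr ⟨hmem _ (List.getElem_mem _), hconfpv⟩
    · rw [Finset.mem_singleton] at hz; subst hz
      exact Finset.mem_filter.mpr ⟨hmem _ (List.getElem_mem _), hconfnx⟩
  have hcard2 : ({cl[pv], cl[nx]} : Finset (V × V)).card = 2 :=
    Finset.card_pair hnodup_ne
  have heq := Finset.eq_of_subset_of_card_le hsub
    (by rw [hcard2]; exact hdeg _ (hmem _ (List.getElem_mem _)))
  have hx : x ∈ ({cl[pv], cl[nx]} : Finset (V × V)) := by
    rw [heq]; exact Finset.mem_filter.mpr ⟨hxM, hconf⟩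
  rcases Finset.mem_insert.mp hx with rfl | hx
  · exact ⟨pv, hpvlt, rfl, by omega⟩
  · rw [Finset.mem_singleton] at hx; subst hx
    exact ⟨nx, hnxlt, rfl, by omega⟩



lemma GMatching.empty : GMatching G (∅ : Finset (V × V)) := ⟨by simp, by simp⟩

lemma GInducedMatching.empty : GInducedMatching G (∅ : Finset (V × V)) :=
  ⟨GMatching.empty, by simp⟩

lemma induced_insert {M' : Finset (V × V)} {e : V × V}
    (hind : GInducedMatching G M') (hmat : GMatching G (insert e M'))
    (hnc : ∀ x ∈ M', ¬ Conf G e x) : GInducedMatching G (insert e M') := by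
  refine ⟨hmat, ?_⟩
  intro a ha b hb hab hj
  rcases Finset.mem_insert.mp ha with rfl | ha' <;>
    rcases Finset.mem_insert.mp hb with rfl | hb'
  · exact hab rfl
  · exact hnc b hb' ⟨hab, hj⟩
  · exact hnc a ha' ⟨hab.symm, EdgeJoined.symm hj⟩
  · exact hind.2 a ha' b hb' hab hj

/-- Lemma A -/
lemma lemA {g : ℕ} (hgir : G.egirth = (g : ℕ∞)) (hg3 : 3 ≤ g) :
    ∀ (m : ℕ) (M : Finset (V × V)), M.card = m → GMatching G M →
    (∀ e ∈ M, degC G M e ≤ 2) →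
    ∃ M', M' ⊆ M ∧ GInducedMatching G M' ∧
      (M.card : ℝ) * (1 - 2 / (g : ℝ)) ≤ 2 * (M'.card : ℝ) := by
  have hgR : (3 : ℝ) ≤ (g : ℝ) := by exact_mod_cast hg3
  have hgpos : (0 : ℝ) < (g : ℝ) := by linarith
  have hdnn : (0 : ℝ) ≤ 2 / (g : ℝ) := by positivity
  have hco0 : (0 : ℝ) ≤ 1 - 2 / (g : ℝ) := by
    rw [sub_nonneg, div_le_one hgpos]; linarith
  intro m
  induction m using Nat.strong_induction_on with
  | _ m ih =>
    intro M hcard hM hdeg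
    by_cases hemp : M = ∅
    · exact ⟨∅, by simp [hemp], GInducedMatching.empty, by simp [hemp]⟩
    by_cases hlow : ∃ e ∈ M, degC G M e ≤ 1
    · obtain ⟨e, heM, hde⟩ := hlow
      have hm1 : 1 ≤ m := by rw [← hcard]; exact Finset.card_pos.mpr ⟨e, heM⟩
      by_cases hRe : (M.filter (fun f => Conf G e f)) = ∅
      · -- e has no conflicts at all
        have hsub1 : M.erase e ⊆ M := Finset.erase_subset _ _
        have hc1 : (M.erase e).card = m - 1 := by
          rw [Finset.card_erase_of_mem heM, hcard]
        obtain ⟨M'', hsub'', hind'', hbound''⟩ := ih (m-1) (by omega) _ hc1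
          (matching_subset hM hsub1) (fun f hf => le_trans (degC_mono hsub1 f) (hdeg f (hsub1 hf)))
        have heM'' : e ∉ M'' := fun h => Finset.notMem_erase e M (hsub'' h)
        have hsubM : insert e M'' ⊆ M := by
          intro z hz; rcases Finset.mem_insert.mp hz with rfl | hz
          · exact heM
          · exact hsub1 (hsub'' hz)
        refine ⟨insert e M'', hsubM, induced_insert hind'' (matching_subset hM hsubM) ?_, ?_⟩
        · intro x hx hc
          have : x ∈ M.filter (fun f => Conf G e f) :=
            Finset.mem_filter.mpr ⟨hsub1 (hsub'' hx), hc⟩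
          rw [hRe] at this; exact absurd this (Finset.notMem_empty _)
        · rw [Finset.card_insert_of_notMem heM'']
          rw [hc1] at hbound''
          have hcast : ((m - 1 : ℕ) : ℝ) = (m : ℝ) - 1 := by
            rw [Nat.cast_sub hm1]; norm_num
          rw [hcast] at hbound''
          rw [hcard]
          push_cast
          nlinarith [hbound'', hco0, hdnn]
      · -- e has exactly one conflict, with f
        obtain ⟨f, hfR⟩ := Finset.nonempty_iff_ne_empty.mpr hRe
        rw [Finset.mem_filter] at hfR
        obtain ⟨hfM, hconfef⟩ := hfR
        have hef : e ≠ f := hconfef.ne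
        have hm2 : 2 ≤ m := by
          rw [← hcard]; exact Finset.one_lt_card.mpr ⟨e, heM, f, hfM, hef⟩
        have hfE : f ∈ M.erase e := Finset.mem_erase.mpr ⟨hef.symm, hfM⟩
        have hsub1 : (M.erase e).erase f ⊆ M :=
          (Finset.erase_subset _ _).trans (Finset.erase_subset _ _)
        have hc1 : ((M.erase e).erase f).card = m - 2 := by
          rw [Finset.card_erase_of_mem hfE, Finset.card_erase_of_mem heM, hcard]
          omega
        obtain ⟨M'', hsub'', hind'', hbound''⟩ := ih (m-2) (by omega) _ hc1
          (matching_subset hM hsub1) (fun x hx => le_trans (degC_mono hsub1 x) (hdeg x (hsub1 hx)))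
        have heM'' : e ∉ M'' := fun h =>
          Finset.notMem_erase e M ((Finset.erase_subset _ _) (hsub'' h))
        have hsubM : insert e M'' ⊆ M := by
          intro z hz; rcases Finset.mem_insert.mp hz with rfl | hz
          · exact heM
          · exact hsub1 (hsub'' hz)
        refine ⟨insert e M'', hsubM, induced_insert hind'' (matching_subset hM hsubM) ?_, ?_⟩
        · intro x hx hc
          have hxR : x ∈ M.filter (fun f => Conf G e f) :=
            Finset.mem_filter.mpr ⟨hsub1 (hsub'' hx), hc⟩
          have hxf : x = f := by
            have hcard1 : (M.filter (fun f => Conf G e f)).card ≤ 1 := hde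
            exact Finset.card_le_one.mp hcard1 x hxR f
              (Finset.mem_filter.mpr ⟨hfM, hconfef⟩)
          subst hxf
          exact (Finset.mem_erase.mp (hsub'' hx)).1 rfl
        · rw [Finset.card_insert_of_notMem heM'']
          rw [hc1] at hbound''
          have hcast : ((m - 2 : ℕ) : ℝ) = (m : ℝ) - 2 := by
            rw [Nat.cast_sub hm2]; norm_num
          rw [hcast] at hbound''
          rw [hcard]
          push_cast
          nlinarith [hbound'', hco0, hdnn]
    · -- all degrees ≥ 2 : find a cycle
      push_neg at hlow
      have hi2 : ∀ e ∈ M, 2 ≤ degC G M e := fun e he => hlow e he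
      obtain ⟨cl, hne, hnd, h3, hch, hmemM, hwrap⟩ :=
        exists_conf_cycle (Finset.nonempty_iff_ne_empty.mpr hemp) hi2
      set ℓ := cl.length with hℓ
      have hgl : g ≤ 2 * ℓ := by
        have h1 := girth_transfer hM cl hnd h3 hch hmemM hne hwrap
        rw [hgir] at h1
        exact_mod_cast h1
      have hclsubM : cl.toFinset ⊆ M := by
        intro z hz; exact hmemM z (List.mem_toFinset.mp hz)
      have hclcard : cl.toFinset.card = ℓ := List.toFinset_card_of_nodup hnd
      have hlm : ℓ ≤ m := by rw [← hcard, ← hclcard]; exact Finset.card_le_card hclsubM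
      -- the selection of alternate elements
      set sel := everyOther cl.dropLast with hsel
      have hselnd : sel.Nodup := hnd.sublist ((eo_sublist _).trans (List.dropLast_sublist _))
      have hselsubcl : ∀ x ∈ sel, x ∈ cl :=
        fun x hx => (List.dropLast_sublist cl).mem ((eo_sublist _).mem hx)
      have hselcard : sel.toFinset.card = sel.length := List.toFinset_card_of_nodup hselnd
      have hsellen : ℓ - 1 ≤ 2 * sel.length := by
        have := eo_len cl.dropLast
        rwa [List.length_dropLast] at this
      -- index facts for selected elements
      have hselidx : ∀ x ∈ sel, ∃ i, ∃ h : i < ℓ, i % 2 = 0 ∧ i < ℓ - 1 ∧ cl[i] = x := by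
        intro x hx
        obtain ⟨i, hilt, hpar, hget⟩ := eo_idx cl.dropLast x hx
        rw [List.length_dropLast] at hilt
        refine ⟨i, by omega, hpar, hilt, ?_⟩
        rw [← hget]
        exact (List.getElem_dropLast (xs := cl) (i := i) (by rw [List.length_dropLast]; exact hilt)).symm
      -- recurse on the rest
      have hsub1 : M \ cl.toFinset ⊆ M := Finset.sdiff_subset
      have hc1 : (M \ cl.toFinset).card = m - ℓ := by
        rw [Finset.card_sdiff_of_subset hclsubM, hclcard, hcard]
      obtain ⟨M'', hsub'', hind'', hbound''⟩ := ih (m - ℓ) (by omega) _ hc1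
        (matching_subset hM hsub1) (fun x hx => le_trans (degC_mono hsub1 x) (hdeg x (hsub1 hx)))
      -- no conflicts from a selected element except to its cyclic neighbours
      have hkey : ∀ x ∈ sel, ∀ y ∈ M, Conf G x y →
          ∃ (j : ℕ) (hj : j < ℓ), y = cl[j] ∧
            (∀ i, ∀ hiℓ : i < ℓ, i % 2 = 0 → i < ℓ - 1 → cl[i] = x →
              (j = i + 1 ∨ i = j + 1 ∨ (i = 0 ∧ j = ℓ - 1) ∨ (j = 0 ∧ i = ℓ - 1))) := by
        intro x hx y hy hc
        obtain ⟨i, hiℓ, hpar, hilt, hget⟩ := hselidx x hx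
        subst hget
        obtain ⟨j, hj, hyj, hrel⟩ := cyc_classify hnd h3 hch hmemM hne hwrap hdeg i hiℓ y hy hc
        refine ⟨j, hj, hyj, ?_⟩
        intro i' hi' _ _ hgeti'
        have : i' = i := hnd.getElem_inj_iff.mp hgeti'
        subst this
        exact hrel
      set M' := sel.toFinset ∪ M'' with hM'
      have hdisj : Disjoint sel.toFinset M'' := by
        rw [Finset.disjoint_left]
        intro x hx hx''
        have : x ∈ cl.toFinset := List.mem_toFinset.mpr (hselsubcl x (List.mem_toFinset.mp hx))
        exact (Finset.mem_sdiff.mp (hsub'' hx'')).2 this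
      have hsubM : M' ⊆ M := by
        intro z hz
        rcases Finset.mem_union.mp hz with hz | hz
        · exact hclsubM (List.mem_toFinset.mpr (hselsubcl z (List.mem_toFinset.mp hz)))
        · exact hsub1 (hsub'' hz)
      have hM''M : M'' ⊆ M := fun z hz => hsub1 (hsub'' hz)
      refine ⟨M', hsubM, ⟨matching_subset hM hsubM, ?_⟩, ?_⟩
      · -- induced property
        intro a ha b hb hab hj
        rcases Finset.mem_union.mp ha with ha' | ha' <;>
          rcases Finset.mem_union.mp hb with hb' | hb'
        · -- both selected
          obtain ⟨ia, hiaℓ, hpara, hialt, hgeta⟩ := hselidx a (List.mem_toFinset.mp ha')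
          obtain ⟨j, hjℓ, hbj, hrel⟩ := hkey a (List.mem_toFinset.mp ha') b (hsubM hb)
            ⟨hab, hj⟩
          obtain ⟨ib, hibℓ, hparb, hiblt, hgetb⟩ := hselidx b (List.mem_toFinset.mp hb')
          have hjb : j = ib := by
            rw [← hgetb] at hbj
            exact hnd.getElem_inj_iff.mp hbj.symm
          subst hjb
          have := hrel ia hiaℓ hpara hialt hgeta
          omega
        · -- a selected, b in the recursive part
          obtain ⟨j, hjℓ, hbj, -⟩ := hkey a (List.mem_toFinset.mp ha') b (hsubM hb)
            ⟨hab, hj⟩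
          have hbcl : b ∈ cl.toFinset := by
            rw [hbj]; exact List.mem_toFinset.mpr (List.getElem_mem _)
          exact (Finset.mem_sdiff.mp (hsub'' hb')).2 hbcl
        · -- b selected, a in the recursive part
          obtain ⟨j, hjℓ, haj, -⟩ := hkey b (List.mem_toFinset.mp hb') a (hsubM ha)
            ⟨hab.symm, EdgeJoined.symm hj⟩
          have hacl : a ∈ cl.toFinset := by
            rw [haj]; exact List.mem_toFinset.mpr (List.getElem_mem _)
          exact (Finset.mem_sdiff.mp (hsub'' ha')).2 hacl
        · exact hind''.2 a ha' b hb' hab hj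
      · -- the counting
        rw [hM', Finset.card_union_of_disjoint hdisj, hselcard]
        rw [hc1] at hbound''
        have hcast : ((m - ℓ : ℕ) : ℝ) = (m : ℝ) - ℓ := by
          rw [Nat.cast_sub hlm]
        rw [hcast] at hbound''
        have hsellenR : (ℓ : ℝ) - 1 ≤ 2 * (sel.length : ℝ) := by
          have : ((ℓ - 1 : ℕ) : ℝ) ≤ ((2 * sel.length : ℕ) : ℝ) := by exact_mod_cast hsellen
          rw [Nat.cast_sub (by omega : 1 ≤ ℓ)] at this
          push_cast at this ⊢
          linarith
        have hglR : (g : ℝ) ≤ 2 * (ℓ : ℝ) := by exact_mod_cast hgl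
        have hstep : (ℓ : ℝ) * (1 - 2 / (g : ℝ)) ≤ (ℓ : ℝ) - 1 := by
          have h1 : (1 : ℝ) ≤ 2 * (ℓ : ℝ) / (g : ℝ) := by
            rw [le_div_iff₀ hgpos]; linarith
          have h2 : (ℓ : ℝ) * (2 / (g : ℝ)) = 2 * (ℓ : ℝ) / (g : ℝ) := by ring
          nlinarith
        rw [hcard]
        push_cast
        nlinarith [hbound'', hsellenR, hstep]



/-- the number of ordered conflict pairs equals the sum of conflict degrees -/
lemma conf_pairs_card (M : Finset (V × V)) :
    (M.biUnion (fun e => (M.filter (fun f => Conf G e f)).image (fun f => (e, f)))).card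
      = ∑ e ∈ M, degC G M e := by
  rw [Finset.card_biUnion]
  · apply Finset.sum_congr rfl
    intro e _
    rw [Finset.card_image_of_injective]
    · rfl
    · intro a b hab
      exact (Prod.mk.injEq _ _ _ _).mp hab |>.2
  · intro e he f hf hef
    simp only [Finset.disjoint_left, Finset.mem_image]
    rintro p ⟨x, _, rfl⟩ ⟨y, _, h⟩
    exact hef ((Prod.mk.injEq _ _ _ _).mp h).1.symm

variable (G) in
/-- canonical choice of a joining edge -/
def phiJ (p : (V × V) × (V × V)) : V × V :=
  if G.Adj p.1.1 p.2.1 then (p.1.1, p.2.1)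
  else if G.Adj p.1.1 p.2.2 then (p.1.1, p.2.2)
  else if G.Adj p.1.2 p.2.1 then (p.1.2, p.2.1)
  else (p.1.2, p.2.2)

lemma phiJ_spec {e f : V × V} (h : EdgeJoined G e f) :
    G.Adj (phiJ G (e, f)).1 (phiJ G (e, f)).2 ∧
      Vm e (phiJ G (e, f)).1 ∧ Vm f (phiJ G (e, f)).2 := by
  unfold phiJ
  rcases h with h1 | h2 | h3 | h4 <;> split_ifs with a b c <;>
    simp_all [Vm] <;> tauto



end AIM

namespace AIM2
open AIM

variable {n : ℕ} {G : SimpleGraph (Fin n ⊕ Fin n)} [DecidableRel G.Adj]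

abbrev lv (e : (Fin n ⊕ Fin n) × (Fin n ⊕ Fin n)) : Fin n ⊕ Fin n :=
  if e.1.isLeft then e.1 else e.2
abbrev rv (e : (Fin n ⊕ Fin n) × (Fin n ⊕ Fin n)) : Fin n ⊕ Fin n :=
  if e.1.isLeft then e.2 else e.1

lemma isRight_iff (v : Fin n ⊕ Fin n) : v.isRight = true ↔ v.isLeft = false := by
  cases v <;> simp

lemma bdiff {a b : Bool} (h : a ≠ b) : (a = true ↔ b = false) ∧ (a = false ↔ b = true) := by
  cases a <;> cases b <;> simp_all

lemma deg_sum_bound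
    (hbip : ∀ a b : Fin n ⊕ Fin n, G.Adj a b → a.isLeft ≠ b.isLeft)
    (g : ℕ) (t : ℕ) (β : ℝ)
    (hsparse : ∀ T : Finset (Fin n ⊕ Fin n),
      (T.filter (fun v => v.isLeft)).card = (T.filter (fun v => v.isRight)).card →
      (T.filter (fun v => v.isLeft)).card ≤ t →
      ((((T ×ˢ T).filter (fun p => G.Adj p.1 p.2)).card : ℝ)) ≤
        2 * (2 + β / (g : ℝ)) * ((T.filter (fun v => v.isLeft)).card : ℝ))
    (M : Finset ((Fin n ⊕ Fin n) × (Fin n ⊕ Fin n))) (hM : GMatching G M)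
    (hMt : M.card ≤ t) :
    ((∑ e ∈ M, degC G M e : ℕ) : ℝ) + 2 * M.card ≤ 2 * (2 + β / (g : ℝ)) * M.card := by
  classical
  have hone : ∀ e ∈ M, e.1.isLeft ≠ e.2.isLeft := fun e he => hbip _ _ (hM.1 e he)
  have hlvVm : ∀ e : (Fin n ⊕ Fin n) × (Fin n ⊕ Fin n), Vm e (lv e) := by
    intro e; unfold lv Vm; split <;> simp
  have hrvVm : ∀ e : (Fin n ⊕ Fin n) × (Fin n ⊕ Fin n), Vm e (rv e) := by
    intro e; unfold rv Vm; split <;> simp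
  have hlvL : ∀ e ∈ M, (lv e).isLeft = true := by
    intro e he
    have h := hone e he
    unfold lv; split
    · assumption
    · next hc =>
      have h1 : e.1.isLeft = false := by revert hc; cases e.1.isLeft <;> simp
      exact (bdiff h).2.mp h1
  have hrvL : ∀ e ∈ M, (rv e).isRight = true := by
    intro e he
    have h := hone e he
    unfold rv; split
    · next hc =>
      rw [isRight_iff]
      exact (bdiff h).1.mp hc
    · next hc =>
      rw [isRight_iff]
      revert hc; cases e.1.isLeft <;> simp
  set T := M.biUnion (fun e => {e.1, e.2}) with hT
  have hTmem : ∀ v, v ∈ T ↔ ∃ e ∈ M, Vm e v := by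
    intro v
    rw [hT, Finset.mem_biUnion]
    constructor
    · rintro ⟨e, he, hv⟩
      refine ⟨e, he, ?_⟩
      rcases Finset.mem_insert.mp hv with rfl | hv
      · exact Or.inl rfl
      · exact Or.inr (Finset.mem_singleton.mp hv)
    · rintro ⟨e, he, (rfl | rfl)⟩
      · exact ⟨e, he, Finset.mem_insert_self _ _⟩
      · exact ⟨e, he, Finset.mem_insert.mpr (Or.inr (Finset.mem_singleton_self _))⟩
  have hfL : T.filter (fun v => v.isLeft) = M.image lv := by
    ext v
    rw [Finset.mem_filter, Finset.mem_image]
    constructor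
    · rintro ⟨hvT, hvL⟩
      obtain ⟨e, he, hVm⟩ := (hTmem v).mp hvT
      refine ⟨e, he, ?_⟩
      rcases hVm with rfl | rfl
      · unfold lv; rw [if_pos hvL]
      · unfold lv
        have h := hone e he
        have h1 : e.1.isLeft = false := (bdiff h).2.mpr hvL
        rw [if_neg (by rw [h1]; simp)]
    · rintro ⟨e, he, rfl⟩
      exact ⟨(hTmem _).mpr ⟨e, he, hlvVm e⟩, hlvL e he⟩
  have hfR : T.filter (fun v => v.isRight) = M.image rv := by
    ext v
    rw [Finset.mem_filter, Finset.mem_image]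
    constructor
    · rintro ⟨hvT, hvR⟩
      obtain ⟨e, he, hVm⟩ := (hTmem v).mp hvT
      refine ⟨e, he, ?_⟩
      have hvnotL : v.isLeft = false := (isRight_iff v).mp hvR
      rcases hVm with rfl | rfl
      · unfold rv; rw [if_neg (by rw [hvnotL]; simp)]
      · unfold rv
        have h := hone e he
        have h1 : e.1.isLeft = true := by
          have h2 : e.2.isLeft = false := hvnotL
          cases hb : e.1.isLeft
          · exact absurd ((bdiff h).2.mp hb) (by rw [h2]; simp)
          · rfl
        rw [if_pos h1]
    · rintro ⟨e, he, rfl⟩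
      exact ⟨(hTmem _).mpr ⟨e, he, hrvVm e⟩, hrvL e he⟩
  have hlvcard : (M.image lv).card = M.card := by
    apply Finset.card_image_of_injOn
    intro e he f hf hef
    exact vdisj hM he hf (hlvVm e) (hef ▸ hlvVm f)
  have hrvcard : (M.image rv).card = M.card := by
    apply Finset.card_image_of_injOn
    intro e he f hf hef
    exact vdisj hM he hf (hrvVm e) (hef ▸ hrvVm f)
  -- apply the sparseness assumption
  have hsp := hsparse T (by rw [hfL, hfR, hlvcard, hrvcard])
    (by rw [hfL, hlvcard]; exact hMt)
  rw [hfL, hlvcard] at hsp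
  -- the ordered conflict pairs
  set Dp := M.biUnion (fun e => (M.filter (fun f => Conf G e f)).image (fun f => (e, f)))
    with hDp
  have hDmem : ∀ p, p ∈ Dp ↔ p.1 ∈ M ∧ p.2 ∈ M ∧ Conf G p.1 p.2 := by
    intro p
    rw [hDp, Finset.mem_biUnion]
    constructor
    · rintro ⟨e, he, hp⟩
      obtain ⟨f, hf, rfl⟩ := Finset.mem_image.mp hp
      obtain ⟨hfM, hcf⟩ := Finset.mem_filter.mp hf
      exact ⟨he, hfM, hcf⟩
    · rintro ⟨h1, h2, h3⟩
      exact ⟨p.1, h1, Finset.mem_image.mpr ⟨p.2, Finset.mem_filter.mpr ⟨h2, h3⟩, rfl⟩⟩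
  have hDcard : Dp.card = ∑ e ∈ M, degC G M e := conf_pairs_card M
  set A := Dp.image (phiJ G) with hA
  have hAcard : A.card = Dp.card := by
    apply Finset.card_image_of_injOn
    intro p hp q hq hpq
    obtain ⟨hp1, hp2, hp3⟩ := (hDmem p).mp hp
    obtain ⟨hq1, hq2, hq3⟩ := (hDmem q).mp hq
    obtain ⟨_, hpx, hpy⟩ := phiJ_spec (G := G) (e := p.1) (f := p.2) hp3.2
    obtain ⟨_, hqx, hqy⟩ := phiJ_spec (G := G) (e := q.1) (f := q.2) hq3.2
    have h1 : p.1 = q.1 := vdisj hM hp1 hq1 hpx (by rw [show ((p.1, p.2) : _) = p from rfl, hpq, show q = ((q.1, q.2) : _) from rfl] at hpx ⊢; exact hqx)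
    have h2 : p.2 = q.2 := vdisj hM hp2 hq2 hpy (by rw [show ((p.1, p.2) : _) = p from rfl, hpq, show q = ((q.1, q.2) : _) from rfl] at hpy ⊢; exact hqy)
    exact Prod.ext h1 h2
  set B := M ∪ M.image Prod.swap with hB
  have hswapdisj : Disjoint M (M.image Prod.swap) := by
    rw [Finset.disjoint_left]
    intro z hz hz'
    obtain ⟨w, hw, hzw⟩ := Finset.mem_image.mp hz'
    have : z = w := vdisj hM hz hw (Or.inl rfl) (by rw [← hzw]; exact Or.inr rfl)
    subst this
    have : z.1 = z.2 := by
      have := congrArg Prod.fst hzw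
      simp at this
      exact this.symm
    exact (hM.1 z hz).ne this
  have hBcard : B.card = 2 * M.card := by
    rw [hB, Finset.card_union_of_disjoint hswapdisj,
      Finset.card_image_of_injective _ Prod.swap_injective]
    ring
  have hABdisj : Disjoint A B := by
    rw [Finset.disjoint_left]
    intro z hzA hzB
    obtain ⟨p, hp, rfl⟩ := Finset.mem_image.mp hzA
    obtain ⟨hp1, hp2, hp3⟩ := (hDmem p).mp hp
    obtain ⟨_, hpx, hpy⟩ := phiJ_spec (G := G) (e := p.1) (f := p.2) hp3.2
    have hpne : p.1 ≠ p.2 := hp3.1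
    have hps : phiJ G (p.1, p.2) = phiJ G p := by rfl
    rw [hps] at hpx hpy
    rcases Finset.mem_union.mp hzB with hz | hz
    · have h1 : p.1 = phiJ G p := vdisj hM hp1 hz hpx (Or.inl rfl)
      have h2 : p.2 = phiJ G p := vdisj hM hp2 hz hpy (Or.inr rfl)
      exact hpne (h1.trans h2.symm)
    · obtain ⟨w, hw, hzw⟩ := Finset.mem_image.mp hz
      have h1 : p.1 = w := vdisj hM hp1 hw hpx (by rw [← hzw]; exact Or.inr rfl)
      have h2 : p.2 = w := vdisj hM hp2 hw hpy (by rw [← hzw]; exact Or.inl rfl)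
      exact hpne (h1.trans h2.symm)
  have hsubT : ∀ z ∈ A ∪ B, z ∈ (T ×ˢ T).filter (fun p => G.Adj p.1 p.2) := by
    intro z hz
    rw [Finset.mem_filter, Finset.mem_product]
    rcases Finset.mem_union.mp hz with hz | hz
    · obtain ⟨p, hp, rfl⟩ := Finset.mem_image.mp hz
      obtain ⟨hp1, hp2, hp3⟩ := (hDmem p).mp hp
      obtain ⟨hadj, hpx, hpy⟩ := phiJ_spec (G := G) (e := p.1) (f := p.2) hp3.2
      have hps : phiJ G (p.1, p.2) = phiJ G p := rfl
      rw [hps] at hadj hpx hpy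
      exact ⟨⟨(hTmem _).mpr ⟨p.1, hp1, hpx⟩, (hTmem _).mpr ⟨p.2, hp2, hpy⟩⟩, hadj⟩
    · rcases Finset.mem_union.mp hz with hz | hz
      · exact ⟨⟨(hTmem _).mpr ⟨z, hz, Or.inl rfl⟩, (hTmem _).mpr ⟨z, hz, Or.inr rfl⟩⟩,
          hM.1 z hz⟩
      · obtain ⟨w, hw, rfl⟩ := Finset.mem_image.mp hz
        exact ⟨⟨(hTmem _).mpr ⟨w, hw, Or.inr rfl⟩, (hTmem _).mpr ⟨w, hw, Or.inl rfl⟩⟩,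
          (hM.1 w hw).symm⟩
  have hcount : Dp.card + 2 * M.card ≤ ((T ×ˢ T).filter (fun p => G.Adj p.1 p.2)).card := by
    calc Dp.card + 2 * M.card = A.card + B.card := by rw [hAcard, hBcard]
      _ = (A ∪ B).card := (Finset.card_union_of_disjoint hABdisj).symm
      _ ≤ _ := Finset.card_le_card hsubT
  rw [← hDcard]
  calc ((Dp.card : ℕ) : ℝ) + 2 * M.card
      = ((Dp.card + 2 * M.card : ℕ) : ℝ) := by push_cast; ring
    _ ≤ (((T ×ˢ T).filter (fun p => G.Adj p.1 p.2)).card : ℝ) := by exact_mod_cast hcount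
    _ ≤ 2 * (2 + β / (g : ℝ)) * M.card := hsp



theorem stmt11' {n : ℕ} (G : SimpleGraph (Fin n ⊕ Fin n)) [DecidableRel G.Adj]
    (hbip : ∀ a b : Fin n ⊕ Fin n, G.Adj a b → a.isLeft ≠ b.isLeft)
    (g : ℕ) (hgirth : G.egirth = (g : ℕ∞))
    (t : ℕ) (β : ℝ) (hβ : 0 < β)
    (hsparse : ∀ T : Finset (Fin n ⊕ Fin n),
      (T.filter (fun v => v.isLeft)).card = (T.filter (fun v => v.isRight)).card →
      (T.filter (fun v => v.isLeft)).card ≤ t →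
      ((((T ×ˢ T).filter (fun p => G.Adj p.1 p.2)).card : ℝ)) ≤
        2 * (2 + β / (g : ℝ)) * ((T.filter (fun v => v.isLeft)).card : ℝ)) :
    ∀ M : Finset ((Fin n ⊕ Fin n) × (Fin n ⊕ Fin n)), GMatching G M → M.card ≤ t →
      ∃ M' ⊆ M, GInducedMatching G M' ∧
        (1 / 2 - (1 + β) / (g : ℝ)) * (M.card : ℝ) ≤ (M'.card : ℝ) := by
  have hg3 : 3 ≤ g := by
    have h := SimpleGraph.three_le_egirth (G := G)
    rw [hgirth] at h
    exact_mod_cast h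
  have hgR : (3 : ℝ) ≤ (g : ℝ) := by exact_mod_cast hg3
  have hgpos : (0 : ℝ) < (g : ℝ) := by linarith
  have hco0 : (0 : ℝ) ≤ 1 - 2 / (g : ℝ) := by
    rw [sub_nonneg, div_le_one hgpos]; linarith
  have hκ2 : (1 / 2 - (1 + β) / (g : ℝ)) ≤ 1 / 2 := by
    have : (0:ℝ) ≤ (1 + β) / (g : ℝ) := by positivity
    linarith
  suffices main : ∀ (m : ℕ) (M : Finset ((Fin n ⊕ Fin n) × (Fin n ⊕ Fin n))),
      GMatching G M → M.card ≤ t → M.card = m →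
      ∃ M', M' ⊆ M ∧ GInducedMatching G M' ∧
        (1 / 2 - (1 + β) / (g : ℝ)) * (m : ℝ) ≤ (M'.card : ℝ) by
    intro M hM hMt
    obtain ⟨M', h1, h2, h3⟩ := main M.card M hM hMt rfl
    exact ⟨M', h1, h2, h3⟩
  intro m
  induction m using Nat.strong_induction_on with
  | _ m ih =>
    intro M hM hMt hcard
    by_cases hemp : M = ∅
    · refine ⟨∅, by simp [hemp], GInducedMatching.empty, ?_⟩
      subst hemp
      simp at hcard
      simp [← hcard]
    by_cases hlow : ∃ e ∈ M, degC G M e ≤ 1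
    · obtain ⟨e, heM, hde⟩ := hlow
      have hm1 : 1 ≤ m := by rw [← hcard]; exact Finset.card_pos.mpr ⟨e, heM⟩
      by_cases hRe : (M.filter (fun f => Conf G e f)) = ∅
      · have hsub1 : M.erase e ⊆ M := Finset.erase_subset _ _
        have hc1 : (M.erase e).card = m - 1 := by
          rw [Finset.card_erase_of_mem heM, hcard]
        obtain ⟨M'', hsub'', hind'', hbound''⟩ := ih (m-1) (by omega) _
          (matching_subset hM hsub1) (le_trans (Finset.card_le_card hsub1) hMt) hc1
        have heM'' : e ∉ M'' := fun h => Finset.notMem_erase e M (hsub'' h)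
        have hsubM : insert e M'' ⊆ M := by
          intro z hz; rcases Finset.mem_insert.mp hz with rfl | hz
          · exact heM
          · exact hsub1 (hsub'' hz)
        refine ⟨insert e M'', hsubM,
          induced_insert hind'' (matching_subset hM hsubM) ?_, ?_⟩
        · intro x hx hc
          have : x ∈ M.filter (fun f => Conf G e f) :=
            Finset.mem_filter.mpr ⟨hsub1 (hsub'' hx), hc⟩
          rw [hRe] at this; exact absurd this (Finset.notMem_empty _)
        · rw [Finset.card_insert_of_notMem heM'']
          have hcast : ((m - 1 : ℕ) : ℝ) = (m : ℝ) - 1 := by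
            rw [Nat.cast_sub hm1]; norm_num
          rw [hcast] at hbound''
          push_cast
          nlinarith [hbound'', hκ2]
      · obtain ⟨f, hfR⟩ := Finset.nonempty_iff_ne_empty.mpr hRe
        rw [Finset.mem_filter] at hfR
        obtain ⟨hfM, hconfef⟩ := hfR
        have hef : e ≠ f := hconfef.ne
        have hm2 : 2 ≤ m := by
          rw [← hcard]; exact Finset.one_lt_card.mpr ⟨e, heM, f, hfM, hef⟩
        have hfE : f ∈ M.erase e := Finset.mem_erase.mpr ⟨hef.symm, hfM⟩
        have hsub1 : (M.erase e).erase f ⊆ M :=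
          (Finset.erase_subset _ _).trans (Finset.erase_subset _ _)
        have hc1 : ((M.erase e).erase f).card = m - 2 := by
          rw [Finset.card_erase_of_mem hfE, Finset.card_erase_of_mem heM, hcard]
          omega
        obtain ⟨M'', hsub'', hind'', hbound''⟩ := ih (m-2) (by omega) _
          (matching_subset hM hsub1) (le_trans (Finset.card_le_card hsub1) hMt) hc1
        have heM'' : e ∉ M'' := fun h =>
          Finset.notMem_erase e M ((Finset.erase_subset _ _) (hsub'' h))
        have hsubM : insert e M'' ⊆ M := by
          intro z hz; rcases Finset.mem_insert.mp hz with rfl | hz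
          · exact heM
          · exact hsub1 (hsub'' hz)
        refine ⟨insert e M'', hsubM,
          induced_insert hind'' (matching_subset hM hsubM) ?_, ?_⟩
        · intro x hx hc
          have hxR : x ∈ M.filter (fun f => Conf G e f) :=
            Finset.mem_filter.mpr ⟨hsub1 (hsub'' hx), hc⟩
          have hxf : x = f := Finset.card_le_one.mp hde x hxR f
            (Finset.mem_filter.mpr ⟨hfM, hconfef⟩)
          subst hxf
          exact (Finset.mem_erase.mp (hsub'' hx)).1 rfl
        · rw [Finset.card_insert_of_notMem heM'']
          have hcast : ((m - 2 : ℕ) : ℝ) = (m : ℝ) - 2 := by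
            rw [Nat.cast_sub hm2]; norm_num
          rw [hcast] at hbound''
          push_cast
          nlinarith [hbound'', hκ2]
    · -- minimum conflict degree ≥ 2
      push_neg at hlow
      have hi2 : ∀ e ∈ M, 2 ≤ degC G M e := fun e he => hlow e he
      have hds := deg_sum_bound hbip g t β hsparse M hM hMt
      have hsumcast : ((∑ e ∈ M, degC G M e : ℕ) : ℝ) = ∑ e ∈ M, (degC G M e : ℝ) := by
        push_cast; rfl
      set D₃ := M.filter (fun e => 3 ≤ degC G M e) with hD₃
      set M₂ := M.filter (fun e => ¬ 3 ≤ degC G M e) with hM₂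
      have hpart : D₃.card + M₂.card = m := by
        rw [hD₃, hM₂, Finset.card_filter_add_card_filter_not, hcard]
      have hD3le : (D₃.card : ℝ) ≤ ∑ e ∈ M, ((degC G M e : ℝ) - 2) := by
        calc (D₃.card : ℝ) = ∑ _e ∈ D₃, (1 : ℝ) := by simp
          _ ≤ ∑ e ∈ D₃, ((degC G M e : ℝ) - 2) := by
              apply Finset.sum_le_sum
              intro e he
              have h3 : 3 ≤ degC G M e := (Finset.mem_filter.mp he).2
              have : (3 : ℝ) ≤ (degC G M e : ℝ) := by exact_mod_cast h3
              linarith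
          _ ≤ ∑ e ∈ M, ((degC G M e : ℝ) - 2) := by
              apply Finset.sum_le_sum_of_subset_of_nonneg (Finset.filter_subset _ _)
              intro e heM _
              have h2 : 2 ≤ degC G M e := hi2 e heM
              have : (2 : ℝ) ≤ (degC G M e : ℝ) := by exact_mod_cast h2
              linarith
      have hsumsub : ∑ e ∈ M, ((degC G M e : ℝ) - 2)
          = (∑ e ∈ M, (degC G M e : ℝ)) - 2 * m := by
        rw [Finset.sum_sub_distrib, Finset.sum_const, hcard]
        push_cast
        ring
      have hD3bound : (D₃.card : ℝ) ≤ 2 * (β / (g : ℝ)) * m := by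
        rw [hsumsub] at hD3le
        rw [hsumcast, hcard] at hds
        nlinarith [hds, hD3le]
      -- apply Lemma A to M₂
      have hM₂sub : M₂ ⊆ M := Finset.filter_subset _ _
      have hdeg₂ : ∀ e ∈ M₂, degC G M₂ e ≤ 2 := by
        intro e he
        have h1 : degC G M e ≤ 2 := by
          have := (Finset.mem_filter.mp he).2
          omega
        exact le_trans (degC_mono hM₂sub e) h1
      obtain ⟨M', hsub', hind', hbound'⟩ := lemA hgirth hg3 M₂.card M₂ rfl
        (matching_subset hM hM₂sub) hdeg₂
      refine ⟨M', hsub'.trans hM₂sub, hind', ?_⟩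
      have hM₂card : (M₂.card : ℝ) = (m : ℝ) - D₃.card := by
        have : (D₃.card : ℝ) + M₂.card = m := by exact_mod_cast hpart
        linarith
      rw [hM₂card] at hbound'
      have hmnn : (0 : ℝ) ≤ (m : ℝ) := Nat.cast_nonneg m
      have hkey : ((m : ℝ) - 2 * (β / (g : ℝ)) * m) * (1 - 2 / (g : ℝ)) ≤
          ((m : ℝ) - D₃.card) * (1 - 2 / (g : ℝ)) := by
        apply mul_le_mul_of_nonneg_right _ hco0
        linarith [hD3bound]
      have hfinal : (1 / 2 - (1 + β) / (g : ℝ)) * (m : ℝ) * 2 ≤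
          ((m : ℝ) - 2 * (β / (g : ℝ)) * m) * (1 - 2 / (g : ℝ)) := by
        have hgne : (g : ℝ) ≠ 0 := ne_of_gt hgpos
        have hdiff : ((m : ℝ) - 2 * (β / (g : ℝ)) * m) * (1 - 2 / (g : ℝ))
            - (1 / 2 - (1 + β) / (g : ℝ)) * (m : ℝ) * 2 = 4 * β * m / (g : ℝ)^2 := by
          field_simp
          ring
        have hpos : (0 : ℝ) ≤ 4 * β * m / (g : ℝ)^2 := by positivity
        linarith
      linarith [hbound', hkey, hfinal]

end AIM2


/-- In a balanced bipartite graph of girth `g` in which every balanced vertex subset of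
size at most `t` per side spans at most `(2 + β/g)` times that many edges, every matching
of size at most `t` contains an induced matching of at least a `(1/2 − (1+β)/g)` fraction
of its edges (i.e. `α_{≤t}(G) ≥ 1/2 − (1+β)/g`). -/
theorem stmt11 {n : ℕ} (G : SimpleGraph (Fin n ⊕ Fin n)) [DecidableRel G.Adj]
    (hbip : ∀ a b : Fin n ⊕ Fin n, G.Adj a b → a.isLeft ≠ b.isLeft)
    (g : ℕ) (hgirth : G.egirth = (g : ℕ∞))
    (t : ℕ) (β : ℝ) (hβ : 0 < β)
    (hsparse : ∀ T : Finset (Fin n ⊕ Fin n),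
      (T.filter (fun v => v.isLeft)).card = (T.filter (fun v => v.isRight)).card →
      (T.filter (fun v => v.isLeft)).card ≤ t →
      ((((T ×ˢ T).filter (fun p => G.Adj p.1 p.2)).card : ℝ)) ≤
        2 * (2 + β / (g : ℝ)) * ((T.filter (fun v => v.isLeft)).card : ℝ)) :
    ∀ M : Finset ((Fin n ⊕ Fin n) × (Fin n ⊕ Fin n)), GMatching G M → M.card ≤ t →
      ∃ M' ⊆ M, GInducedMatching G M' ∧
        (1 / 2 - (1 + β) / (g : ℝ)) * (M.card : ℝ) ≤ (M'.card : ℝ) :=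
  AIM2.stmt11' G hbip g hgirth t β hβ hsparse
end

section
/- Let C be a cycle of length 2k where k is odd. Then C contains a matching M of size k (every other edge of the cycle) such that the largest induced matching contained in M has size exactly (k−1)/2. Consequently, any graph containing such a cycle has α_k strictly less than 1/2. -/
/-- The multitasking capacity `α_k(G)`: the maximal `α ∈ (0,1]` such that every matching
of size `k` contains an induced matching of size at least `α·k`; equal to `1` if `G`
has no matching of size `k`. -/
noncomputable def alphaMT {V : Type*} (G : SimpleGraph V) (k : ℕ) : ℝ :=
  letI := Classical.dec (∃ M : Finset (V × V), GMatching G M ∧ M.card = k)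
  if ∃ M : Finset (V × V), GMatching G M ∧ M.card = k then
    sSup {a : ℝ | 0 < a ∧ a ≤ 1 ∧
      ∀ M : Finset (V × V), GMatching G M → M.card = k →
        ∃ M' ⊆ M, GInducedMatching G M' ∧ a * (k : ℝ) ≤ (M'.card : ℝ)}
  else 1

lemma modsmall (a n : ℕ) (h : a < 2*n) : a % n = if a < n then a else a - n := by
  split
  · exact Nat.mod_eq_of_lt ‹_›
  · rw [Nat.mod_eq_sub_mod (by omega), Nat.mod_eq_of_lt (by omega)]

lemma cyc_adj (n : ℕ) (hn : 2 ≤ n) (u v : Fin n) :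
    (SimpleGraph.cycleGraph n).Adj u v ↔ (u.1 + 1) % n = v.1 ∨ (v.1 + 1) % n = u.1 := by
  rw [SimpleGraph.cycleGraph_adj']
  have hu := u.isLt
  have hv := v.isLt
  simp only [Fin.sub_def, Fin.val_mk]
  rw [modsmall (n - ↑v + ↑u) n (by omega), modsmall (n - ↑u + ↑v) n (by omega),
    modsmall (↑u + 1) n (by omega), modsmall (↑v + 1) n (by omega)]
  constructor
  · rintro (h | h) <;> [right; left] <;> split at h <;> split <;> omega
  · rintro (h | h) <;> [right; left] <;> split at h <;> split <;> omega

variable {k : ℕ}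

/-- The `i`-th edge of the standard matching in `C_{2k}`. -/
def ed (i : Fin k) : Fin (2*k) × Fin (2*k) :=
  (⟨2*i.1, by have := i.isLt; omega⟩, ⟨2*i.1+1, by have := i.isLt; omega⟩)

lemma ed_inj : Function.Injective (ed (k := k)) := by
  intro i j h
  simp only [ed, Prod.mk.injEq, Fin.mk.injEq] at h
  exact Fin.ext (by omega)

lemma joined_iff (hk : 3 ≤ k) (i j : Fin k) (hij : i ≠ j) :
    EdgeJoined (SimpleGraph.cycleGraph (2*k)) (ed i) (ed j) ↔
      (i.1 + 1) % k = j.1 ∨ (j.1 + 1) % k = i.1 := by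
  have hi := i.isLt
  have hj := j.isLt
  have hij' : i.1 ≠ j.1 := fun h => hij (Fin.ext h)
  simp only [EdgeJoined, ed, cyc_adj (2*k) (by omega), Fin.val_mk]
  rw [modsmall (2*i.1+1) (2*k) (by omega), modsmall (2*i.1+1+1) (2*k) (by omega),
    modsmall (2*j.1+1) (2*k) (by omega), modsmall (2*j.1+1+1) (2*k) (by omega),
    modsmall (i.1+1) k (by omega), modsmall (j.1+1) k (by omega)]
  split_ifs <;> omega

def Mstd (k : ℕ) : Finset (Fin (2*k) × Fin (2*k)) := Finset.univ.image ed

lemma mem_Mstd {e : Fin (2*k) × Fin (2*k)} : e ∈ Mstd k ↔ ∃ i, ed i = e := by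
  simp [Mstd]

lemma GMatching_subset {V : Type*} {G : SimpleGraph V} {M M' : Finset (V × V)}
    (h : GMatching G M) (hs : M' ⊆ M) : GMatching G M' :=
  ⟨fun e he => h.1 e (hs he), fun e he f hf => h.2 e (hs he) f (hs hf)⟩

lemma Mstd_matching (hk : 3 ≤ k) : GMatching (SimpleGraph.cycleGraph (2*k)) (Mstd k) := by
  constructor
  · intro e he
    obtain ⟨i, rfl⟩ := mem_Mstd.mp he
    have hi := i.isLt
    rw [cyc_adj (2*k) (by omega)]
    left
    simp only [ed, Fin.val_mk]
    rw [modsmall (2*i.1+1) (2*k) (by omega)]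
    split <;> omega
  · intro e he f hf hef
    obtain ⟨i, rfl⟩ := mem_Mstd.mp he
    obtain ⟨j, rfl⟩ := mem_Mstd.mp hf
    have hi := i.isLt
    have hj := j.isLt
    have hij : i.1 ≠ j.1 := fun h => hef (congrArg ed (Fin.ext h))
    refine ⟨?_, ?_, ?_, ?_⟩ <;> (simp only [ed, Ne, Fin.mk.injEq]; omega)

lemma Mstd_card (hk : 3 ≤ k) : (Mstd k).card = k := by
  rw [Mstd, Finset.card_image_of_injective _ ed_inj, Finset.card_univ, Fintype.card_fin]

lemma indep_bound (hk : 3 ≤ k) (hodd : Odd k) (S : Finset (Fin k))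
    (hS : ∀ i ∈ S, ∀ j ∈ S, i ≠ j → ¬((i.1+1) % k = j.1 ∨ (j.1+1) % k = i.1)) :
    S.card ≤ (k-1)/2 := by
  obtain ⟨m, rfl⟩ : ∃ m, k = m + 3 := ⟨k - 3, by omega⟩
  set T := S.image (fun i => i + 1) with hT
  have hd : Disjoint S T := by
    rw [Finset.disjoint_left]
    intro x hx hxT
    rw [hT, Finset.mem_image] at hxT
    obtain ⟨j, hj, rfl⟩ := hxT
    have hj1 : ((j + 1 : Fin (m+3))).1 = (j.1 + 1) % (m+3) := by
      rw [Fin.add_def, Fin.val_one]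
    have hne : j ≠ j + 1 := by
      intro h
      have := j.isLt
      rw [← h] at hj1
      rw [modsmall _ _ (by omega)] at hj1
      split at hj1 <;> omega
    exact hS j hj (j+1) hx hne (Or.inl hj1.symm)
  have hTcard : T.card = S.card :=
    Finset.card_image_of_injective _ (add_left_injective 1)
  have hun : (S ∪ T).card ≤ m + 3 := by
    calc (S ∪ T).card ≤ (Finset.univ : Finset (Fin (m+3))).card :=
          Finset.card_le_card (Finset.subset_univ _)
      _ = m + 3 := by rw [Finset.card_univ, Fintype.card_fin]
  rw [Finset.card_union_of_disjoint hd, hTcard] at hun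
  obtain ⟨t, ht⟩ := hodd
  omega

lemma sub_bound (hk : 3 ≤ k) (hodd : Odd k) (M' : Finset (Fin (2*k) × Fin (2*k)))
    (hsub : M' ⊆ Mstd k)
    (hind : GInducedMatching (SimpleGraph.cycleGraph (2*k)) M') :
    M'.card ≤ (k-1)/2 := by
  set S := Finset.univ.filter (fun i : Fin k => ed i ∈ M') with hSdef
  have himg : S.image ed = M' := by
    ext e
    simp only [hSdef, Finset.mem_image, Finset.mem_filter, Finset.mem_univ, true_and]
    constructor
    · rintro ⟨i, hi, rfl⟩; exact hi
    · intro he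
      obtain ⟨i, rfl⟩ := mem_Mstd.mp (hsub he)
      exact ⟨i, he, rfl⟩
  have hcard : M'.card = S.card := by
    rw [← himg, Finset.card_image_of_injective _ ed_inj]
  rw [hcard]
  apply indep_bound hk hodd
  intro i hi j hj hij hcon
  simp only [hSdef, Finset.mem_filter, Finset.mem_univ, true_and] at hi hj
  exact hind.2 (ed i) hi (ed j) hj (fun h => hij (ed_inj h))
    ((joined_iff hk i j hij).mpr hcon)

lemma exists_lower (hk : 3 ≤ k) (hodd : Odd k) :
    ∃ M' ⊆ Mstd k, GInducedMatching (SimpleGraph.cycleGraph (2*k)) M' ∧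
      M'.card = (k-1)/2 := by
  obtain ⟨m, hm⟩ := hodd
  have hkpos : 0 < k := by omega
  set g : ℕ → Fin (2*k) × Fin (2*k) := fun t => ed ⟨(2*t) % k, Nat.mod_lt _ hkpos⟩ with hg
  have hgval : ∀ t < (k-1)/2, ((2*t) % k) = 2*t := fun t ht =>
    Nat.mod_eq_of_lt (by omega)
  set M' := (Finset.range ((k-1)/2)).image g with hM'
  have hsub : M' ⊆ Mstd k := by
    intro e he
    obtain ⟨t, ht, rfl⟩ := Finset.mem_image.mp he
    exact mem_Mstd.mpr ⟨_, rfl⟩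
  refine ⟨M', hsub, ⟨GMatching_subset (Mstd_matching hk) hsub, ?_⟩, ?_⟩
  · intro e he f hf hef hjoin
    obtain ⟨t, ht, rfl⟩ := Finset.mem_image.mp he
    obtain ⟨s, hs, rfl⟩ := Finset.mem_image.mp hf
    rw [Finset.mem_range] at ht hs
    have hne : (⟨(2*t) % k, Nat.mod_lt _ hkpos⟩ : Fin k) ≠ ⟨(2*s) % k, Nat.mod_lt _ hkpos⟩ := by
      intro h; exact hef (congrArg ed h)
    rw [hg] at hjoin
    rw [joined_iff hk _ _ hne] at hjoin
    simp only [Fin.val_mk] at hjoin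
    rw [hgval t ht, hgval s hs, modsmall _ _ (by omega), modsmall _ _ (by omega)] at hjoin
    rcases hjoin with h | h <;> split at h <;> omega
  · rw [hM', Finset.card_image_of_injOn, Finset.card_range]
    intro t ht s hs h
    rw [Finset.coe_range, Set.mem_Iio] at ht hs
    have := congrArg (fun e => (Prod.fst e).1) h
    simp only [hg, ed, Fin.val_mk] at this
    rw [hgval t ht, hgval s hs] at this
    omega

/-- The cycle `C` of length `2k`, `k` odd, contains a matching `M` of size `k` (every
other edge) whose largest induced submatching has size exactly `(k-1)/2`; consequently,
any graph containing such a cycle has `α_k < 1/2`. -/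
theorem stmt13 (k : ℕ) (hodd : Odd k) (hk : 3 ≤ k) :
    (∃ M : Finset (Fin (2 * k) × Fin (2 * k)),
      GMatching (SimpleGraph.cycleGraph (2 * k)) M ∧ M.card = k ∧
      (∃ M' ⊆ M, GInducedMatching (SimpleGraph.cycleGraph (2 * k)) M' ∧
        M'.card = (k - 1) / 2) ∧
      (∀ M' ⊆ M, GInducedMatching (SimpleGraph.cycleGraph (2 * k)) M' →
        M'.card ≤ (k - 1) / 2)) ∧
    (∀ (V : Type) (G : SimpleGraph V) (f : Fin (2 * k) → V), Function.Injective f →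
      (∀ i j, (SimpleGraph.cycleGraph (2 * k)).Adj i j → G.Adj (f i) (f j)) →
      alphaMT G k < 1 / 2) := by
  obtain ⟨m, hm⟩ := hodd
  constructor
  · exact ⟨Mstd k, Mstd_matching hk, Mstd_card hk, exists_lower hk ⟨m, hm⟩,
      fun M' hsub hind => sub_bound hk ⟨m, hm⟩ M' hsub hind⟩
  · intro V G f hf hhom
    classical
    set MG := (Mstd k).image (Prod.map f f) with hMGdef
    have hinjP : Function.Injective (Prod.map f f : _ → V × V) :=
      Function.Injective.prodMap hf hf
    have hGmatch : GMatching G MG := by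
      constructor
      · intro e he
        obtain ⟨e', he', rfl⟩ := Finset.mem_image.mp he
        simp only [Prod.map_fst, Prod.map_snd]
        exact hhom _ _ ((Mstd_matching hk).1 e' he')
      · intro e he e2 he2 hne
        obtain ⟨a, ha, rfl⟩ := Finset.mem_image.mp he
        obtain ⟨b, hb, rfl⟩ := Finset.mem_image.mp he2
        have hab : a ≠ b := fun h => hne (by rw [h])
        obtain ⟨h1, h2, h3, h4⟩ := (Mstd_matching hk).2 a ha b hb hab
        simp only [Prod.map_fst, Prod.map_snd]
        exact ⟨fun h => h1 (hf h), fun h => h2 (hf h),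
          fun h => h3 (hf h), fun h => h4 (hf h)⟩
    have hGcard : MG.card = k := by
      rw [hMGdef, Finset.card_image_of_injective _ hinjP, Mstd_card hk]
    have hex : ∃ M : Finset (V × V), GMatching G M ∧ M.card = k := ⟨MG, hGmatch, hGcard⟩
    rw [alphaMT, if_pos hex]
    have hB : (0:ℝ) ≤ (m:ℝ)/(2*m+1) := by positivity
    have hlt : (m:ℝ)/(2*m+1) < 1/2 := by
      rw [div_lt_div_iff₀ (by positivity) (by norm_num)]
      push_cast
      linarith
    refine lt_of_le_of_lt (Real.sSup_le ?_ hB) hlt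
    rintro a ⟨hapos, ha1, hP⟩
    obtain ⟨M'', hsub'', hind'', hcard''⟩ := hP MG hGmatch hGcard
    set N := (Mstd k).filter (fun e => Prod.map f f e ∈ M'') with hNdef
    have hNsub : N ⊆ Mstd k := Finset.filter_subset _ _
    have hNind : GInducedMatching (SimpleGraph.cycleGraph (2*k)) N := by
      refine ⟨GMatching_subset (Mstd_matching hk) hNsub, ?_⟩
      intro e he e' he' hne hj
      simp only [hNdef, Finset.mem_filter] at he he'
      have hne' : Prod.map f f e ≠ Prod.map f f e' := fun h => hne (hinjP h)
      refine hind''.2 _ he.2 _ he'.2 hne' ?_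
      simp only [EdgeJoined] at hj ⊢
      simp only [Prod.map_fst, Prod.map_snd]
      rcases hj with h | h | h | h
      · exact Or.inl (hhom _ _ h)
      · exact Or.inr (Or.inl (hhom _ _ h))
      · exact Or.inr (Or.inr (Or.inl (hhom _ _ h)))
      · exact Or.inr (Or.inr (Or.inr (hhom _ _ h)))
    have hNle : N.card ≤ (k-1)/2 := sub_bound hk ⟨m, hm⟩ N hNsub hNind
    have hM''le : M''.card ≤ N.card := by
      have hss : M'' ⊆ N.image (Prod.map f f) := by
        intro e'' he''
        obtain ⟨e, heM, rfl⟩ := Finset.mem_image.mp (hsub'' he'')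
        exact Finset.mem_image.mpr ⟨e, Finset.mem_filter.mpr ⟨heM, he''⟩, rfl⟩
      calc M''.card ≤ (N.image (Prod.map f f)).card := Finset.card_le_card hss
        _ ≤ N.card := Finset.card_image_le
    have hMm : M''.card ≤ m := by omega
    have h1 : a * (k:ℝ) ≤ (m:ℝ) :=
      le_trans hcard'' (by exact_mod_cast hMm)
    rw [le_div_iff₀ (by positivity)]
    have hkr : (k:ℝ) = 2*m+1 := by exact_mod_cast congrArg (Nat.cast : ℕ → ℝ) hm
    linarith [h1, hkr ▸ h1]
end
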